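/- arXiv:1912.07647 — 3 statements merged into one kernel-verified Lean document; each statement's English description precedes it below -/
import Mathlib

section
/- For every integer t ≥ 1, every graph G with no odd K_t minor has independence number α(G) ≥ |V(G)|/(2t). -/
open SimpleGraph

universe u v

/-- The density `e(G)/v(G)` of a graph. -/
noncomputable def GraphDensity {V : Type u} (G : SimpleGraph V) : ℝ :=
  (Nat.card G.edgeSet : ℝ) / (Nat.card V : ℝ)

/-- A graph is bipartite: there is a 2-coloring with no monochromatic edge. -/
def IsBipartiteGraph {V : Type u} (G : SimpleGraph V) : Prop :=
  ∃ c : V → Bool, ∀ x y : V, G.Adj x y → c x ≠ c y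

/-- The branch sets of an expansion: pairwise vertex-disjoint subgraphs of `G`,
each of which is a tree. -/
def IsExpansionShape {V : Type u} {W : Type v} (G : SimpleGraph V)
    (T : W → G.Subgraph) : Prop :=
  (∀ w : W, (T w).coe.IsTree) ∧
  ∀ w w' : W, w ≠ w' → Disjoint (T w).verts (T w').verts

/-- `G` has an `H` minor: there is an `H`-expansion in `G`. -/
def HasMinor {V : Type u} {W : Type v} (G : SimpleGraph V) (H : SimpleGraph W) : Prop :=
  ∃ T : W → G.Subgraph, IsExpansionShape G T ∧
    ∀ w w' : W, H.Adj w w' →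
      ∃ x ∈ (T w).verts, ∃ y ∈ (T w').verts, G.Adj x y

/-- `G` has an odd `H` minor: there is an `H`-expansion in `G` together with a
2-coloring such that every edge of every tree of the expansion is bichromatic and
for every edge of `H` a monochromatic connecting edge of `G` can be chosen. -/
def HasOddMinor {V : Type u} {W : Type v} (G : SimpleGraph V) (H : SimpleGraph W) : Prop :=
  ∃ (T : W → G.Subgraph) (c : V → Bool),
    IsExpansionShape G T ∧
    (∀ (w : W) (x y : V), (T w).Adj x y → c x ≠ c y) ∧
    ∀ w w' : W, H.Adj w w' →
      ∃ x ∈ (T w).verts, ∃ y ∈ (T w').verts, G.Adj x y ∧ c x = c y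

/-- `G` has a bipartite `H` minor: there is an `H`-expansion in `G` whose union
(trees plus chosen connecting edges) is a bipartite subgraph of `G`. -/
def HasBipartiteMinor {V : Type u} {W : Type v} (G : SimpleGraph V) (H : SimpleGraph W) : Prop :=
  ∃ (T : W → G.Subgraph) (c : V → Bool),
    IsExpansionShape G T ∧
    (∀ (w : W) (x y : V), (T w).Adj x y → c x ≠ c y) ∧
    ∀ w w' : W, H.Adj w w' →
      ∃ x ∈ (T w).verts, ∃ y ∈ (T w').verts, G.Adj x y ∧ c x ≠ c y

/-- `(A, B)` is a separation of `G`. -/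
def IsSeparation {V : Type u} (G : SimpleGraph V) (A B : Set V) : Prop :=
  A ∪ B = Set.univ ∧
  ∀ x y : V, G.Adj x y → (x ∈ A ∧ y ∈ A) ∨ (x ∈ B ∧ y ∈ B)

/-- `G` is weakly `k`-connected: for every proper separation `(A, B)` of order at
most `k`, `min {|A − B|, |B − A|} < |A ∩ B|`. -/
def WeaklyConnected {V : Type u} (G : SimpleGraph V) (k : ℕ) : Prop :=
  ∀ A B : Set V, IsSeparation G A B → (A \ B).Nonempty → (B \ A).Nonempty →
    (A ∩ B).ncard ≤ k →
    min (A \ B).ncard (B \ A).ncard < (A ∩ B).ncard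

/-- `G` is `k`-connected (so its vertex connectivity `κ(G)` is at least `k`):
`G` has more than `k` vertices and deleting fewer than `k` vertices leaves it connected. -/
def IsKConnected {V : Type u} (G : SimpleGraph V) (k : ℕ) : Prop :=
  k < Nat.card V ∧
  ∀ S : Set V, S.ncard < k → (G.induce (Sᶜ : Set V)).Connected

/-- A family of pairwise vertex-disjoint paths. -/
def IsDisjointPathFamily {V : Type u} {G : SimpleGraph V} {n : ℕ}
    {a b : Fin n → V} (P : ∀ i, G.Walk (a i) (b i)) : Prop :=
  (∀ i, (P i).IsPath) ∧
  ∀ i j, i ≠ j → ∀ w : V, w ∈ (P i).support → w ∉ (P j).support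

/-- The set `S` (of size `2l`) is linked in `G`: for every ordered partition of `S`
into `l` pairs there is a corresponding linkage. -/
def LinkedSet {V : Type u} (G : SimpleGraph V) (l : ℕ) (S : Set V) : Prop :=
  ∀ s t : Fin l → V, (∀ i, s i ∈ S) → (∀ i, t i ∈ S) →
    Function.Injective (Sum.elim s t) →
    ∃ P : ∀ i, G.Walk (s i) (t i), IsDisjointPathFamily P

/-- The set `S` (of size `2l`) is parity-linked in `G`: it is linked, and for every
ordered partition of `S` into `l` pairs and every `I ⊆ [l]` there is a linkage whose
`i`-th path has an odd number of edges exactly when `i ∈ I`. -/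
def ParityLinkedSet {V : Type u} (G : SimpleGraph V) (l : ℕ) (S : Set V) : Prop :=
  LinkedSet G l S ∧
  ∀ s t : Fin l → V, (∀ i, s i ∈ S) → (∀ i, t i ∈ S) →
    Function.Injective (Sum.elim s t) →
    ∀ I : Set (Fin l),
      ∃ P : ∀ i, G.Walk (s i) (t i),
        IsDisjointPathFamily P ∧ ∀ i, Odd (P i).length ↔ i ∈ I

/-- `G` is `l`-linked. -/
def IsLinkedGraph {V : Type u} (G : SimpleGraph V) (l : ℕ) : Prop :=
  2 * l ≤ Nat.card V ∧ ∀ S : Set V, S.ncard = 2 * l → LinkedSet G l S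

/-- `X` is joined to `Y` in `G`: there are `|X|` pairwise vertex-disjoint paths,
each with one end in `X` and the other end in `Y`. -/
def JoinedTo {V : Type u} (G : SimpleGraph V) (X Y : Set V) : Prop :=
  ∃ (t : X → V) (P : ∀ x : X, G.Walk x.1 (t x)),
    (∀ x, t x ∈ Y) ∧ (∀ x, (P x).IsPath) ∧
    ∀ x y : X, x ≠ y → ∀ w : V, w ∈ (P x).support → w ∉ (P y).support

/-- `p` is a parity-breaking path for the bipartite subgraph `H` of `G`: its ends
lie in `H`, it is otherwise vertex-disjoint from `H`, and `H ∪ p` contains an odd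
cycle (i.e. is not bipartite). -/
def IsParityBreakingPath {V : Type u} {G : SimpleGraph V} (H : G.Subgraph)
    {a b : V} (p : G.Walk a b) : Prop :=
  p.IsPath ∧ a ∈ H.verts ∧ b ∈ H.verts ∧
  (∀ w ∈ p.support, w ≠ a → w ≠ b → w ∉ H.verts) ∧
  ¬ IsBipartiteGraph (H ⊔ p.toSubgraph).coe

/-- `X` is parity-knitted in `G`: for every pair of partitions `(A, B)` and
`(X_1, …, X_r)` of `X` there are pairwise vertex-disjoint trees `T_1, …, T_r` in `G`
with `X_i ⊆ V(T_i)` such that `(A ∩ X_i, B ∩ X_i)` extends to the bipartition of `T_i`. -/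
def ParityKnitted {V : Type u} (G : SimpleGraph V) (X : Set V) : Prop :=
  ∀ A B : Set V, A ∪ B = X → Disjoint A B →
  ∀ (r : ℕ) (Xp : Fin r → Set V),
    (⋃ i, Xp i) = X → (∀ i, (Xp i).Nonempty) →
    (∀ i j, i ≠ j → Disjoint (Xp i) (Xp j)) →
    ∃ T : Fin r → G.Subgraph,
      (∀ i, (T i).coe.IsTree) ∧
      (∀ i j, i ≠ j → Disjoint (T i).verts (T j).verts) ∧
      (∀ i, Xp i ⊆ (T i).verts) ∧
      ∀ i, ∃ c : V → Bool,
        (∀ x y : V, (T i).Adj x y → c x ≠ c y) ∧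
        (∀ w ∈ A ∩ Xp i, c w = true) ∧ (∀ w ∈ B ∩ Xp i, c w = false)

namespace OddAux

open SimpleGraph Walk

variable {V : Type u}

/-- Independent set. -/
def Indep (G : SimpleGraph V) (S : Set V) : Prop := ∀ x ∈ S, ∀ y ∈ S, ¬ G.Adj x y

/-- An odd clique minor inside `U` in which every branch set has a `true` vertex. -/
def MinorPlus (G : SimpleGraph V) (t : ℕ) (U : Set V) : Prop :=
  ∃ (T : Fin t → G.Subgraph) (c : V → Bool),
    (∀ i, (T i).verts ⊆ U) ∧
    (∀ i, (T i).coe.IsTree) ∧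
    (∀ i j, i ≠ j → Disjoint (T i).verts (T j).verts) ∧
    (∀ i x y, (T i).Adj x y → c x ≠ c y) ∧
    (∀ i, ∃ x, x ∈ (T i).verts ∧ c x = true) ∧
    (∀ i j, i ≠ j → ∃ x, x ∈ (T i).verts ∧ ∃ y, y ∈ (T j).verts ∧ G.Adj x y ∧ c x = c y)

lemma minorPlus_mono {G : SimpleGraph V} {t : ℕ} {U U' : Set V} (hUU : U ⊆ U')
    (h : MinorPlus G t U) : MinorPlus G t U' := by
  obtain ⟨T, c, h1, h2, h3, h4, h5, h6⟩ := h
  exact ⟨T, c, fun i => (h1 i).trans hUU, h2, h3, h4, h5, h6⟩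

/-- Adding an edge pendant at an isolated vertex keeps a graph acyclic. -/
lemma acyclic_sup_edge (H H' : SimpleGraph V) {x p : V} (hxp : x ≠ p)
    (hH : H.IsAcyclic) (hp : ∀ y, ¬ H.Adj p y)
    (hadj : ∀ a b, H'.Adj a b ↔ H.Adj a b ∨ s(a, b) = s(x, p)) : H'.IsAcyclic := by
  classical
  have hnbr : ∀ b, H'.Adj p b → b = x := by
    intro b hb
    rcases (hadj p b).1 hb with h | h
    · exact absurd h (hp b)
    · rcases Sym2.eq_iff.1 h with ⟨h1, _⟩ | ⟨_, h2⟩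
      · exact absurd h1.symm hxp
      · exact h2
  intro v c hc
  by_cases hpc : p ∈ c.support
  · obtain ⟨w, hw⟩ : ∃ w : H'.Walk p p, w.IsCycle := ⟨c.rotate p hpc, hc.rotate hpc⟩
    cases w with
    | nil => exact hw.ne_nil rfl
    | @cons _ b _ h q =>
      obtain ⟨d, hd, r, hqr⟩ := Walk.exists_eq_cons_of_ne h.ne q.reverse
      have hmem : s(p, b) ∈ q.edges := by
        have h1 : s(p, d) ∈ q.reverse.edges := by
          rw [hqr]; exact List.mem_cons_self
        rw [hnbr _ hd, ← hnbr _ h] at h1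
        rwa [Walk.edges_reverse, List.mem_reverse] at h1
      have hnodup := hw.edges_nodup
      rw [Walk.edges_cons] at hnodup
      exact (List.nodup_cons.1 hnodup).1 hmem
  · have he : ∀ e ∈ c.edges, e ∈ H.edgeSet := by
      intro e hee
      have hee' := c.edges_subset_edgeSet hee
      induction e using Sym2.ind with
      | _ a b =>
        rw [SimpleGraph.mem_edgeSet] at hee' ⊢
        rcases (hadj a b).1 hee' with h | h
        · exact h
        · exfalso
          rcases Sym2.eq_iff.1 h with ⟨h1, h2⟩ | ⟨h1, h2⟩
          · subst h2; exact hpc (Walk.snd_mem_support_of_mem_edges c hee)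
          · subst h1; exact hpc (Walk.fst_mem_support_of_mem_edges c hee)
    exact hH (c.transfer H he) (hc.transfer he)

lemma coe_acyclic_of_spanningCoe {G : SimpleGraph V} (T : G.Subgraph)
    (h : T.spanningCoe.IsAcyclic) : T.coe.IsAcyclic := by
  intro v c hc
  let f : T.coe →g T.spanningCoe := ⟨Subtype.val, fun {a b} hab => hab⟩
  have hinj : Function.Injective f := Subtype.val_injective
  exact h (c.map f) ((Walk.map_isCycle_iff_of_injective hinj).2 hc)

/-- "Good tree" invariant: connected subgraph whose spanning coercion is acyclic. -/
def GT (G : SimpleGraph V) (T : G.Subgraph) : Prop :=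
  T.Connected ∧ T.spanningCoe.IsAcyclic

lemma GT.isTree {G : SimpleGraph V} {T : G.Subgraph} (h : GT G T) : T.coe.IsTree :=
  ⟨h.1.coe, coe_acyclic_of_spanningCoe T h.2⟩

lemma GT_singleton (G : SimpleGraph V) (v : V) : GT G (G.singletonSubgraph v) := by
  refine ⟨Subgraph.singletonSubgraph_connected, ?_⟩
  intro u c hc
  cases c with
  | nil => exact hc.ne_nil rfl
  | cons h q => exact h

lemma GT_sup_edge {G : SimpleGraph V} {T : G.Subgraph} (hT : GT G T) {x p : V}
    (hx : x ∈ T.verts) (hp : p ∉ T.verts) (h : G.Adj x p) :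
    GT G (T ⊔ G.subgraphOfAdj h) := by
  constructor
  · refine Subgraph.connected_sup hT.1.preconnected (Subgraph.subgraphOfAdj_connected h).preconnected ⟨x, hx, ?_⟩
    simp
  · refine acyclic_sup_edge T.spanningCoe _ h.ne hT.2 (fun y hy => hp hy.fst_mem) ?_
    intro a b
    constructor
    · rintro (hab | hab)
      · exact Or.inl hab
      · exact Or.inr (Eq.symm hab)
    · rintro (hab | hab)
      · exact Or.inl hab
      · exact Or.inr (Eq.symm hab)

/-- The restriction of `G` to vertex set `U`, as a graph on `V`. -/
def RG (G : SimpleGraph V) (U : Set V) : SimpleGraph V where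
  Adj a b := G.Adj a b ∧ a ∈ U ∧ b ∈ U
  symm := ⟨fun a b h => ⟨h.1.symm, h.2.2, h.2.1⟩⟩
  loopless := ⟨fun a h => G.loopless.irrefl a h.1⟩

lemma RG_walk_mem {G : SimpleGraph V} {U : Set V} :
    ∀ {a b : V}, (RG G U).Walk a b → a ∈ U → b ∈ U := by
  intro a b w
  induction w with
  | nil => exact id
  | cons h q ih => exact fun _ => ih h.2.2

/-- The set of vertices reachable from `v` inside `U`. -/
def comp (G : SimpleGraph V) (U : Set V) (v : V) : Set V :=
  {u | (RG G U).Reachable v u}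

lemma comp_self (G : SimpleGraph V) (U : Set V) (v : V) : v ∈ comp G U v :=
  Reachable.refl v

lemma comp_subset {G : SimpleGraph V} {U : Set V} {v : V} (hv : v ∈ U) :
    comp G U v ⊆ U := by
  intro u hu
  obtain ⟨w⟩ := hu
  exact RG_walk_mem w hv

lemma comp_closed {G : SimpleGraph V} {U : Set V} {v : V} (hv : v ∈ U) {u u' : V}
    (hu : u ∈ comp G U v) (hu' : u' ∈ U) (hadj : G.Adj u u') : u' ∈ comp G U v :=
  Reachable.trans hu (SimpleGraph.Adj.reachable ⟨hadj, comp_subset hv hu, hu'⟩)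

/-- Along a walk from outside `S` into `S` there is a crossing edge. -/
lemma cross_walk {G' : SimpleGraph V} {S : Set V} :
    ∀ {a b : V}, G'.Walk a b → a ∉ S → b ∈ S →
      ∃ q r, G'.Adj q r ∧ q ∉ S ∧ r ∈ S ∧ G'.Reachable a q := by
  intro a b w
  induction w with
  | nil => exact fun ha hb => absurd hb ha
  | @cons u c b h q ih =>
    intro ha hb
    by_cases hc : c ∈ S
    · exact ⟨u, c, h, ha, hc, Reachable.refl u⟩
    · obtain ⟨q', r', hqr, hq, hr, hreach⟩ := ih hc hb
      exact ⟨q', r', hqr, hq, hr, (h.reachable).trans hreach⟩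

/-- The set of `true`-colored vertices of a subgraph. -/
def Aset {G : SimpleGraph V} (T : G.Subgraph) (c : V → Bool) : Set V :=
  {x | x ∈ T.verts ∧ c x = true}

/-- Invariant for the dominating-tree construction. -/
def InvP (G : SimpleGraph V) (C : Set V) (v : V) (T : G.Subgraph) (c : V → Bool) : Prop :=
  T.verts ⊆ C ∧ v ∈ T.verts ∧ GT G T ∧ (∀ x y, T.Adj x y → c x ≠ c y) ∧ c v = true ∧
  Indep G (Aset T c) ∧ T.verts.ncard + 1 ≤ 2 * (Aset T c).ncard

lemma dom_step [Fintype V] (G : SimpleGraph V) (U : Set V) (v : V) (hvU : v ∈ U)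
    (T : G.Subgraph) (c : V → Bool) (hInv : InvP G (comp G U v) v T c)
    (u : V) (hu : u ∈ comp G U v) (huT : u ∉ T.verts)
    (hbad : ∀ a, a ∈ T.verts → c a = true → ¬ G.Adj u a) :
    ∃ (T' : G.Subgraph) (c' : V → Bool),
      InvP G (comp G U v) v T' c' ∧ T.verts ⊂ T'.verts := by
  classical
  obtain ⟨hTC, hvT, hGT, hprop, hcv, hind, hcard⟩ := hInv
  obtain ⟨w⟩ := hu.symm
  have hus : u ∉ {z | z ∈ T.verts ∨ ∃ a, a ∈ T.verts ∧ c a = true ∧ G.Adj z a} := by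
    intro h
    rcases h with h1 | ⟨a, ha, hca, hadj⟩
    · exact huT h1
    · exact hbad a ha hca hadj
  have hvs : v ∈ {z | z ∈ T.verts ∨ ∃ a, a ∈ T.verts ∧ c a = true ∧ G.Adj z a} :=
    Or.inl hvT
  obtain ⟨q, r, hqr, hqS, hrS, hreach⟩ := cross_walk w hus hvs
  have hGqr : G.Adj q r := hqr.1
  have hqC : q ∈ comp G U v := hu.trans hreach
  have hqT : q ∉ T.verts := fun h => hqS (Or.inl h)
  have hqbad : ∀ a, a ∈ T.verts → c a = true → ¬ G.Adj q a :=
    fun a ha hca hadj => hqS (Or.inr ⟨a, ha, hca, hadj⟩)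
  by_cases hrT : r ∈ T.verts
  · -- leaf case: attach `q` to `r ∈ B`
    have hcr : c r = false := by
      cases hcrb : c r with
      | false => rfl
      | true => exact absurd hGqr (hqbad r hrT hcrb)
    have hrq : r ≠ q := hGqr.symm.ne
    refine ⟨T ⊔ G.subgraphOfAdj hGqr.symm, fun z => if z = q then true else c z, ?_, ?_⟩
    · have hverts : (T ⊔ G.subgraphOfAdj hGqr.symm).verts = insert q T.verts := by
        rw [Subgraph.verts_sup, subgraphOfAdj_verts]
        ext z
        simp only [Set.mem_union, Set.mem_insert_iff, Set.mem_singleton_iff]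
        constructor
        · rintro (h | rfl | rfl)
          · exact Or.inr h
          · exact Or.inr hrT
          · exact Or.inl rfl
        · rintro (rfl | h)
          · exact Or.inr (Or.inr rfl)
          · exact Or.inl h
      have hAeq : Aset (T ⊔ G.subgraphOfAdj hGqr.symm) (fun z => if z = q then true else c z)
          = insert q (Aset T c) := by
        ext z
        simp only [Aset, Set.mem_setOf_eq, hverts, Set.mem_insert_iff]
        constructor
        · rintro ⟨hz1, hz2⟩
          by_cases hzq : z = q
          · exact Or.inl hzq
          · refine Or.inr ⟨hz1.resolve_left hzq, ?_⟩
            rwa [if_neg hzq] at hz2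
        · rintro (rfl | ⟨hz1, hz2⟩)
          · exact ⟨Or.inl rfl, if_pos rfl⟩
          · have hzq : z ≠ q := fun e => hqT (e ▸ hz1)
            exact ⟨Or.inr hz1, by rw [if_neg hzq]; exact hz2⟩
      refine ⟨?_, ?_, ?_, ?_, ?_, ?_, ?_⟩
      · rw [hverts]; exact Set.insert_subset_iff.2 ⟨hqC, hTC⟩
      · rw [hverts]; exact Set.mem_insert_iff.2 (Or.inr hvT)
      · exact GT_sup_edge hGT hrT hqT hGqr.symm
      · intro x y hxy
        rcases hxy with h | h
        · have hxq : x ≠ q := fun e => hqT (e ▸ h.fst_mem)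
          have hyq : y ≠ q := fun e => hqT (e ▸ h.snd_mem)
          simp only [if_neg hxq, if_neg hyq]
          exact hprop x y h
        · rcases Sym2.eq_iff.1 h with ⟨h1, h2⟩ | ⟨h1, h2⟩
          · subst h1; subst h2
            simp only [if_neg hrq, if_pos rfl, hcr]
            simp
          · subst h1; subst h2
            simp only [if_neg hrq, if_pos rfl, hcr]
            simp
      · have hvq : v ≠ q := fun e => hqT (e ▸ hvT)
        simp only [if_neg hvq]; exact hcv
      · rw [hAeq]
        intro x hx y hy hadj
        rcases Set.mem_insert_iff.1 hx with rfl | hx' <;>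
          rcases Set.mem_insert_iff.1 hy with rfl | hy'
        · exact G.loopless.irrefl _ hadj
        · exact hqbad y hy'.1 hy'.2 hadj
        · exact hqbad x hx'.1 hx'.2 hadj.symm
        · exact hind x hx' y hy' hadj
      · rw [hverts, hAeq]
        have hqA : q ∉ Aset T c := fun h => hqT h.1
        rw [Set.ncard_insert_of_notMem hqT, Set.ncard_insert_of_notMem hqA]
        omega
    · have hverts : (T ⊔ G.subgraphOfAdj hGqr.symm).verts = insert q T.verts := by
        rw [Subgraph.verts_sup, subgraphOfAdj_verts]
        ext z
        simp only [Set.mem_union, Set.mem_insert_iff, Set.mem_singleton_iff]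
        constructor
        · rintro (h | rfl | rfl)
          · exact Or.inr h
          · exact Or.inr hrT
          · exact Or.inl rfl
        · rintro (rfl | h)
          · exact Or.inr (Or.inr rfl)
          · exact Or.inl h
      rw [hverts]
      exact Set.ssubset_insert hqT
  · -- path case: attach `q` to `r` to `a ∈ A`
    rcases hrS with h | ⟨a, haT, hca, har⟩
    · exact absurd h hrT
    have hrC : r ∈ comp G U v := hqC.trans hqr.reachable
    have hrq : r ≠ q := hGqr.symm.ne
    have haq : a ≠ q := fun e => hqT (e ▸ haT)
    have har' : G.Adj a r := har.symm
    have hra : r ≠ a := har.ne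
    set T1 : G.Subgraph := T ⊔ G.subgraphOfAdj har' with hT1
    have hverts1 : T1.verts = insert r T.verts := by
      rw [hT1, Subgraph.verts_sup, subgraphOfAdj_verts]
      ext z
      simp only [Set.mem_union, Set.mem_insert_iff, Set.mem_singleton_iff]
      constructor
      · rintro (h | rfl | rfl)
        · exact Or.inr h
        · exact Or.inr haT
        · exact Or.inl rfl
      · rintro (rfl | h)
        · exact Or.inr (Or.inr rfl)
        · exact Or.inl h
    have hGT1 : GT G T1 := GT_sup_edge hGT haT hrT har'
    have hrT1 : r ∈ T1.verts := by rw [hverts1]; exact Set.mem_insert r _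
    have hqT1 : q ∉ T1.verts := by
      rw [hverts1]
      intro h
      rcases Set.mem_insert_iff.1 h with h | h
      · exact hrq h.symm
      · exact hqT h
    have hGrq : G.Adj r q := hGqr.symm
    refine ⟨T1 ⊔ G.subgraphOfAdj hGrq,
      fun z => if z = q then true else if z = r then false else c z, ?_, ?_⟩
    · have hverts : (T1 ⊔ G.subgraphOfAdj hGrq).verts = insert q (insert r T.verts) := by
        rw [Subgraph.verts_sup, subgraphOfAdj_verts, hverts1]
        ext z
        simp only [Set.mem_union, Set.mem_insert_iff, Set.mem_singleton_iff]
        constructor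
        · rintro ((rfl | h) | rfl | rfl)
          · exact Or.inr (Or.inl rfl)
          · exact Or.inr (Or.inr h)
          · exact Or.inr (Or.inl rfl)
          · exact Or.inl rfl
        · rintro (rfl | rfl | h)
          · exact Or.inr (Or.inr rfl)
          · exact Or.inl (Or.inl rfl)
          · exact Or.inl (Or.inr h)
      have hAeq : Aset (T1 ⊔ G.subgraphOfAdj hGrq)
          (fun z => if z = q then true else if z = r then false else c z)
          = insert q (Aset T c) := by
        ext z
        simp only [Aset, Set.mem_setOf_eq, hverts, Set.mem_insert_iff]
        constructor
        · rintro ⟨hz1, hz2⟩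
          by_cases hzq : z = q
          · exact Or.inl hzq
          · rw [if_neg hzq] at hz2
            by_cases hzr : z = r
            · rw [if_pos hzr] at hz2; exact absurd hz2 (by simp)
            · rw [if_neg hzr] at hz2
              rcases hz1 with h | h | h
              · exact absurd h hzq
              · exact absurd h hzr
              · exact Or.inr ⟨h, hz2⟩
        · rintro (rfl | ⟨hz1, hz2⟩)
          · exact ⟨Or.inl rfl, if_pos rfl⟩
          · have hzq : z ≠ q := fun e => hqT (e ▸ hz1)
            have hzr : z ≠ r := fun e => hrT (e ▸ hz1)
            exact ⟨Or.inr (Or.inr hz1), by rw [if_neg hzq, if_neg hzr]; exact hz2⟩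
      refine ⟨?_, ?_, ?_, ?_, ?_, ?_, ?_⟩
      · rw [hverts]
        exact Set.insert_subset_iff.2 ⟨hqC, Set.insert_subset_iff.2 ⟨hrC, hTC⟩⟩
      · rw [hverts]
        exact Set.mem_insert_iff.2 (Or.inr (Set.mem_insert_iff.2 (Or.inr hvT)))
      · exact GT_sup_edge hGT1 hrT1 hqT1 hGrq
      · intro x y hxy
        have hTedge : ∀ x' y' : V, T.Adj x' y' →
            (if x' = q then true else if x' = r then false else c x') ≠
            (if y' = q then true else if y' = r then false else c y') := by
          intro x' y' h
          have hx'q : x' ≠ q := fun e => hqT (e ▸ h.fst_mem)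
          have hy'q : y' ≠ q := fun e => hqT (e ▸ h.snd_mem)
          have hx'r : x' ≠ r := fun e => hrT (e ▸ h.fst_mem)
          have hy'r : y' ≠ r := fun e => hrT (e ▸ h.snd_mem)
          simp only [if_neg hx'q, if_neg hy'q, if_neg hx'r, if_neg hy'r]
          exact hprop x' y' h
        rcases hxy with (h | h) | h
        · exact hTedge x y h
        · -- edge a–r
          rcases Sym2.eq_iff.1 h with ⟨h1, h2⟩ | ⟨h1, h2⟩
          · subst h1; subst h2
            simp only [if_neg haq, if_neg (fun e => hrT (e ▸ haT) : a ≠ r),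
              if_neg hrq, if_pos rfl, hca]
            simp
          · subst h1; subst h2
            simp only [if_neg haq, if_neg (fun e => hrT (e ▸ haT) : a ≠ r),
              if_neg hrq, if_pos rfl, hca]
            simp
        · -- edge r–q
          rcases Sym2.eq_iff.1 h with ⟨h1, h2⟩ | ⟨h1, h2⟩
          · subst h1; subst h2
            simp only [if_neg hrq, if_pos rfl]
            simp
          · subst h1; subst h2
            simp only [if_neg hrq, if_pos rfl]
            simp
      · have hvq : v ≠ q := fun e => hqT (e ▸ hvT)
        have hvr : v ≠ r := fun e => hrT (e ▸ hvT)
        simp only [if_neg hvq, if_neg hvr]; exact hcv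
      · rw [hAeq]
        intro x hx y hy hadj
        rcases Set.mem_insert_iff.1 hx with rfl | hx' <;>
          rcases Set.mem_insert_iff.1 hy with rfl | hy'
        · exact G.loopless.irrefl _ hadj
        · exact hqbad y hy'.1 hy'.2 hadj
        · exact hqbad x hx'.1 hx'.2 hadj.symm
        · exact hind x hx' y hy' hadj
      · rw [hverts, hAeq]
        have hqA : q ∉ Aset T c := fun h => hqT h.1
        have hqins : q ∉ insert r T.verts := by
          intro h
          rcases Set.mem_insert_iff.1 h with h | h
          · exact hrq h.symm
          · exact hqT h
        rw [Set.ncard_insert_of_notMem hqins, Set.ncard_insert_of_notMem hrT,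
          Set.ncard_insert_of_notMem hqA]
        omega
    · have hverts : (T1 ⊔ G.subgraphOfAdj hGrq).verts = insert q (insert r T.verts) := by
        rw [Subgraph.verts_sup, subgraphOfAdj_verts, hverts1]
        ext z
        simp only [Set.mem_union, Set.mem_insert_iff, Set.mem_singleton_iff]
        constructor
        · rintro ((rfl | h) | rfl | rfl)
          · exact Or.inr (Or.inl rfl)
          · exact Or.inr (Or.inr h)
          · exact Or.inr (Or.inl rfl)
          · exact Or.inl rfl
        · rintro (rfl | rfl | h)
          · exact Or.inr (Or.inr rfl)
          · exact Or.inl (Or.inl rfl)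
          · exact Or.inl (Or.inr h)
      rw [hverts]
      constructor
      · intro z hz
        exact Set.mem_insert_iff.2 (Or.inr (Set.mem_insert_iff.2 (Or.inr hz)))
      · intro hcon
        exact hqT (hcon (Set.mem_insert q _))

lemma domtree_rec [Fintype V] (G : SimpleGraph V) (U : Set V) (v : V) (hvU : v ∈ U) :
    ∀ (k : ℕ) (T : G.Subgraph) (c : V → Bool),
      InvP G (comp G U v) v T c → ((comp G U v) \ T.verts).ncard ≤ k →
      ∃ (T' : G.Subgraph) (c' : V → Bool),
        InvP G (comp G U v) v T' c' ∧
        ∀ u, u ∈ comp G U v → u ∉ T'.verts →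
          ∃ a, a ∈ T'.verts ∧ c' a = true ∧ G.Adj u a := by
  intro k
  induction k with
  | zero =>
    intro T c hInv hk
    by_cases hbad : ∃ u, u ∈ comp G U v ∧ u ∉ T.verts ∧
        ∀ a, a ∈ T.verts → c a = true → ¬ G.Adj u a
    · exfalso
      obtain ⟨u, huC, huT, _⟩ := hbad
      have hpos : 0 < ((comp G U v) \ T.verts).ncard :=
        (Set.ncard_pos (Set.toFinite _)).2 ⟨u, huC, huT⟩
      omega
    · push_neg at hbad
      exact ⟨T, c, hInv, hbad⟩
  | succ k ih =>
    intro T c hInv hk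
    by_cases hbad : ∃ u, u ∈ comp G U v ∧ u ∉ T.verts ∧
        ∀ a, a ∈ T.verts → c a = true → ¬ G.Adj u a
    · obtain ⟨u, huC, huT, hub⟩ := hbad
      obtain ⟨T', c', hInv', hss⟩ := dom_step G U v hvU T c hInv u huC huT hub
      refine ih T' c' hInv' ?_
      obtain ⟨z, hzT', hzT⟩ := Set.exists_of_ssubset hss
      have hzC : z ∈ comp G U v := hInv'.1 hzT'
      have hsub : (comp G U v) \ T'.verts ⊆ (comp G U v) \ T.verts :=
        Set.diff_subset_diff_right hss.subset
      have hlt : ((comp G U v) \ T'.verts).ncard < ((comp G U v) \ T.verts).ncard := by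
        apply Set.ncard_lt_ncard _ (Set.toFinite _)
        exact ⟨hsub, fun hcon => (hcon ⟨hzC, hzT⟩).2 hzT'⟩
      omega
    · push_neg at hbad
      exact ⟨T, c, hInv, hbad⟩

lemma domtree [Fintype V] (G : SimpleGraph V) (U : Set V) (v : V) (hvU : v ∈ U) :
    ∃ (T : G.Subgraph) (c : V → Bool),
      InvP G (comp G U v) v T c ∧
      ∀ u, u ∈ comp G U v → u ∉ T.verts →
        ∃ a, a ∈ T.verts ∧ c a = true ∧ G.Adj u a := by
  have h0 : InvP G (comp G U v) v (G.singletonSubgraph v) (fun _ => true) := by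
    have hA : Aset (G.singletonSubgraph v) (fun _ => true) = {v} := by
      ext z
      simp [Aset, singletonSubgraph_verts]
    refine ⟨?_, ?_, GT_singleton G v, ?_, rfl, ?_, ?_⟩
    · rw [singletonSubgraph_verts]
      exact Set.singleton_subset_iff.2 (comp_self G U v)
    · rw [singletonSubgraph_verts]
      exact Set.mem_singleton v
    · intro x y hxy
      exact hxy.elim
    · rw [hA]
      intro x hx y hy hadj
      rw [Set.mem_singleton_iff] at hx hy
      subst hx; subst hy
      exact G.loopless.irrefl _ hadj
    · rw [singletonSubgraph_verts, hA, Set.ncard_singleton]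
  obtain ⟨T, c, hInv, hdom⟩ := domtree_rec G U v hvU
    ((comp G U v) \ (G.singletonSubgraph v).verts).ncard _ _ h0 le_rfl
  exact ⟨T, c, hInv, hdom⟩

lemma minor_extend (G : SimpleGraph V) (t : ℕ) (T : G.Subgraph) (c : V → Bool) (C : Set V)
    (hTC : T.verts ⊆ C)
    (hTree : T.coe.IsTree)
    (hprop : ∀ x y, T.Adj x y → c x ≠ c y)
    (hplus : ∃ x, x ∈ T.verts ∧ c x = true)
    (hdom : ∀ u, u ∈ C → u ∉ T.verts → ∃ a, a ∈ T.verts ∧ c a = true ∧ G.Adj u a)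
    (hM : MinorPlus G t (C \ T.verts)) : MinorPlus G (t + 1) C := by
  classical
  obtain ⟨Ts, c', hsub, htree, hdisj, hprop', hplus', hpair'⟩ := hM
  refine ⟨fun i => Fin.cases T Ts i, fun z => if z ∈ T.verts then c z else c' z,
    ?_, ?_, ?_, ?_, ?_, ?_⟩
  · intro i
    rcases Fin.eq_zero_or_eq_succ i with rfl | ⟨i', rfl⟩
    · simpa using hTC
    · simpa using (hsub i').trans Set.diff_subset
  · intro i
    rcases Fin.eq_zero_or_eq_succ i with rfl | ⟨i', rfl⟩
    · simpa using hTree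
    · simpa using htree i'
  · intro i j hij
    rcases Fin.eq_zero_or_eq_succ i with rfl | ⟨i', rfl⟩ <;>
      rcases Fin.eq_zero_or_eq_succ j with rfl | ⟨j', rfl⟩
    · exact absurd rfl hij
    · simp only [Fin.cases_zero, Fin.cases_succ]
      exact Set.disjoint_left.2 fun z hz hz' => ((hsub j') hz').2 hz
    · simp only [Fin.cases_zero, Fin.cases_succ]
      exact Set.disjoint_left.2 fun z hz hz' => ((hsub i') hz).2 hz'
    · simp only [Fin.cases_succ]
      exact hdisj i' j' fun e => hij (congrArg Fin.succ e)
  · intro i x y hxy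
    rcases Fin.eq_zero_or_eq_succ i with rfl | ⟨i', rfl⟩
    · simp only [Fin.cases_zero] at hxy
      have h1 : x ∈ T.verts := hxy.fst_mem
      have h2 : y ∈ T.verts := hxy.snd_mem
      simp only [if_pos h1, if_pos h2]
      exact hprop x y hxy
    · simp only [Fin.cases_succ] at hxy
      have h1 : x ∉ T.verts := fun h => ((hsub i') hxy.fst_mem).2 h
      have h2 : y ∉ T.verts := fun h => ((hsub i') hxy.snd_mem).2 h
      simp only [if_neg h1, if_neg h2]
      exact hprop' i' x y hxy
  · intro i
    rcases Fin.eq_zero_or_eq_succ i with rfl | ⟨i', rfl⟩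
    · obtain ⟨x, hx, hcx⟩ := hplus
      refine ⟨x, ?_, ?_⟩
      · simpa using hx
      · simp only [if_pos hx]; exact hcx
    · obtain ⟨x, hx, hcx⟩ := hplus' i'
      have hxT : x ∉ T.verts := ((hsub i') hx).2
      refine ⟨x, ?_, ?_⟩
      · simpa using hx
      · simp only [if_neg hxT]; exact hcx
  · intro i j hij
    rcases Fin.eq_zero_or_eq_succ i with rfl | ⟨i', rfl⟩ <;>
      rcases Fin.eq_zero_or_eq_succ j with rfl | ⟨j', rfl⟩
    · exact absurd rfl hij
    · obtain ⟨y, hy, hcy⟩ := hplus' j'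
      have hyC := (hsub j') hy
      obtain ⟨a, haT, hca, hadj⟩ := hdom y hyC.1 hyC.2
      refine ⟨a, ?_, y, ?_, hadj.symm, ?_⟩
      · simpa using haT
      · simpa using hy
      · simp only [if_pos haT, if_neg hyC.2, hca, hcy]
    · obtain ⟨y, hy, hcy⟩ := hplus' i'
      have hyC := (hsub i') hy
      obtain ⟨a, haT, hca, hadj⟩ := hdom y hyC.1 hyC.2
      refine ⟨y, ?_, a, ?_, hadj, ?_⟩
      · simpa using hy
      · simpa using haT
      · simp only [if_pos haT, if_neg hyC.2, hca, hcy]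
    · obtain ⟨x, hx, y, hy, hadj, heq⟩ := hpair' i' j' fun e => hij (congrArg Fin.succ e)
      have hxT : x ∉ T.verts := ((hsub i') hx).2
      have hyT : y ∉ T.verts := ((hsub j') hy).2
      refine ⟨x, ?_, y, ?_, hadj, ?_⟩
      · simpa using hx
      · simpa using hy
      · simp only [if_neg hxT, if_neg hyT]; exact heq

lemma base_case [Fintype V] (G : SimpleGraph V) (U : Set V) :
    MinorPlus G 1 U ∨ ∃ S, S ⊆ U ∧ Indep G S ∧ U.ncard ≤ 2 * 1 * S.ncard := by
  rcases Set.eq_empty_or_nonempty U with rfl | ⟨v, hvU⟩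
  · right
    exact ⟨∅, Set.empty_subset _, fun x hx => (Set.notMem_empty x hx).elim, by simp⟩
  · left
    refine ⟨fun _ => G.singletonSubgraph v, fun _ => true, ?_, ?_, ?_, ?_, ?_, ?_⟩
    · intro i
      rw [singletonSubgraph_verts]
      exact Set.singleton_subset_iff.2 hvU
    · intro i
      exact (GT_singleton G v).isTree
    · intro i j hij
      exact absurd (Subsingleton.elim i j) hij
    · intro i x y hxy
      exact hxy.elim
    · intro i
      exact ⟨v, by rw [singletonSubgraph_verts]; exact Set.mem_singleton v, rfl⟩
    · intro i j hij
      exact absurd (Subsingleton.elim i j) hij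

lemma main [Fintype V] (G : SimpleGraph V) :
    ∀ (t : ℕ) (U : Set V),
      MinorPlus G (t + 1) U ∨ ∃ S, S ⊆ U ∧ Indep G S ∧ U.ncard ≤ 2 * (t + 1) * S.ncard := by
  intro t
  induction t with
  | zero => exact fun U => base_case G U
  | succ t ih =>
    suffices h : ∀ (n : ℕ) (U : Set V), U.ncard ≤ n →
        (MinorPlus G (t + 1 + 1) U ∨
          ∃ S, S ⊆ U ∧ Indep G S ∧ U.ncard ≤ 2 * (t + 1 + 1) * S.ncard) by
      intro U
      exact h U.ncard U le_rfl
    intro n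
    induction n with
    | zero =>
      intro U hU
      right
      have hUe : U = ∅ := (Set.ncard_eq_zero (Set.toFinite U)).1 (Nat.le_zero.1 hU)
      exact ⟨∅, Set.empty_subset _, fun x hx => (Set.notMem_empty x hx).elim,
        by rw [hUe]; simp⟩
    | succ n ihn =>
      intro U hU
      rcases Set.eq_empty_or_nonempty U with rfl | ⟨v, hvU⟩
      · right
        exact ⟨∅, Set.empty_subset _, fun x hx => (Set.notMem_empty x hx).elim, by simp⟩
      · obtain ⟨T, c, hInv, hdom⟩ := domtree G U v hvU
        obtain ⟨hTC, hvT, hGT, hprop, hcv, hind, hcard⟩ := hInv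
        have hCU : comp G U v ⊆ U := comp_subset hvU
        have hUC : (U \ comp G U v).ncard ≤ n := by
          have h1 : U \ comp G U v ⊆ U \ {v} :=
            Set.diff_subset_diff_right (Set.singleton_subset_iff.2 (comp_self G U v))
          have h2 : (U \ {v}).ncard < U.ncard := Set.ncard_diff_singleton_lt_of_mem hvU
          have h3 := Set.ncard_le_ncard h1 (Set.toFinite _)
          omega
        rcases ihn (U \ comp G U v) hUC with hM2 | ⟨S2, hS2U, hS2I, hS2c⟩
        · exact Or.inl (minorPlus_mono Set.diff_subset hM2)
        rcases ih (comp G U v \ T.verts) with hM1 | ⟨S1, hS1U, hS1I, hS1c⟩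
        · left
          have hext := minor_extend G (t + 1) T c (comp G U v) hTC hGT.isTree hprop
            ⟨v, hvT, hcv⟩ hdom hM1
          exact minorPlus_mono hCU hext
        · right
          have hsplitU : U.ncard = (comp G U v).ncard + (U \ comp G U v).ncard := by
            have h1 := Set.ncard_union_eq (Set.disjoint_sdiff_right
              (s := comp G U v) (t := U)) (Set.toFinite _) (Set.toFinite _)
            rw [Set.union_diff_cancel hCU] at h1
            exact h1
          have hsplitC : (comp G U v).ncard = T.verts.ncard + (comp G U v \ T.verts).ncard := by
            have h1 := Set.ncard_union_eq (Set.disjoint_sdiff_right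
              (s := T.verts) (t := comp G U v)) (Set.toFinite _) (Set.toFinite _)
            rw [Set.union_diff_cancel hTC] at h1
            exact h1
          have hA_sub : Aset T c ⊆ T.verts := fun z hz => hz.1
          have hAC : Aset T c ⊆ comp G U v := hA_sub.trans hTC
          by_cases hAS : S1.ncard ≤ (Aset T c).ncard
          · refine ⟨Aset T c ∪ S2, ?_, ?_, ?_⟩
            · exact Set.union_subset (hAC.trans hCU) (hS2U.trans Set.diff_subset)
            · intro x hx y hy hadj
              rcases hx with hx' | hx' <;> rcases hy with hy' | hy'
              · exact hind x hx' y hy' hadj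
              · exact absurd (comp_closed hvU (hAC hx') (hS2U hy').1 hadj) (hS2U hy').2
              · exact absurd (comp_closed hvU (hAC hy') (hS2U hx').1 hadj.symm) (hS2U hx').2
              · exact hS2I x hx' y hy' hadj
            · have hdis : Disjoint (Aset T c) S2 :=
                Set.disjoint_left.2 fun z hz hz2 => (hS2U hz2).2 (hAC hz)
              rw [Set.ncard_union_eq hdis (Set.toFinite _) (Set.toFinite _)]
              have k1 : 2 * (t + 1) * S1.ncard ≤ 2 * (t + 1) * (Aset T c).ncard :=
                Nat.mul_le_mul_left _ hAS
              nlinarith [hsplitU, hsplitC, hcard, hS1c, hS2c, k1]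
          · have hAS' : (Aset T c).ncard ≤ S1.ncard := le_of_not_ge hAS
            have hS1C : S1 ⊆ comp G U v := fun z hz => (hS1U hz).1
            refine ⟨S1 ∪ S2, ?_, ?_, ?_⟩
            · exact Set.union_subset (hS1C.trans hCU) (hS2U.trans Set.diff_subset)
            · intro x hx y hy hadj
              rcases hx with hx' | hx' <;> rcases hy with hy' | hy'
              · exact hS1I x hx' y hy' hadj
              · exact absurd (comp_closed hvU (hS1C hx') (hS2U hy').1 hadj) (hS2U hy').2
              · exact absurd (comp_closed hvU (hS1C hy') (hS2U hx').1 hadj.symm) (hS2U hx').2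
              · exact hS2I x hx' y hy' hadj
            · have hdis : Disjoint S1 S2 :=
                Set.disjoint_left.2 fun z hz hz2 => (hS2U hz2).2 (hS1C hz)
              rw [Set.ncard_union_eq hdis (Set.toFinite _) (Set.toFinite _)]
              have k1 : 2 * (Aset T c).ncard ≤ 2 * S1.ncard := Nat.mul_le_mul_left _ hAS'
              nlinarith [hsplitU, hsplitC, hcard, hS1c, hS2c, k1]

end OddAux

/-- For every integer t ≥ 1, every graph G with no odd `K_t` minor has
independence number α(G) ≥ |V(G)|/(2t). -/
theorem indep_number_of_no_odd_minor (t : ℕ) (ht : 1 ≤ t)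
    (V : Type u) [Fintype V] (G : SimpleGraph V)
    (h : ¬ HasOddMinor G (⊤ : SimpleGraph (Fin t))) :
    ∃ S : Set V, (∀ x ∈ S, ∀ y ∈ S, ¬ G.Adj x y) ∧
      (Nat.card V : ℝ) / (2 * t) ≤ S.ncard := by
  classical
  obtain ⟨t', rfl⟩ : ∃ t', t = t' + 1 := ⟨t - 1, (Nat.succ_pred_eq_of_pos ht).symm⟩
  rcases OddAux.main G t' Set.univ with hM | ⟨S, _, hI, hcard⟩
  · exfalso
    apply h
    obtain ⟨T, c, _, h2, h3, h4, h5, h6⟩ := hM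
    exact ⟨T, c, ⟨h2, h3⟩, h4, fun w w' hww' => h6 w w' ((SimpleGraph.top_adj w w').1 hww')⟩
  · refine ⟨S, hI, ?_⟩
    have hcard' : (Nat.card V : ℝ) ≤ 2 * (t' + 1) * S.ncard := by
      have hn : Nat.card V ≤ 2 * (t' + 1) * S.ncard := by
        rw [← Set.ncard_univ]
        exact hcard
      exact_mod_cast hn
    rw [div_le_iff₀ (by push_cast; positivity)]
    push_cast at hcard' ⊢
    nlinarith [hcard']
end

section
/- Every non-null graph G contains a subgraph H whose vertex connectivity satisfies κ(H) ≥ d(G)/2, where d(G) = |E(G)|/|V(G)| is the density of G. -/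
open SimpleGraph

universe u v

variable {V : Type u}

lemma edgeSet_eq_image {G : SimpleGraph V} (H : G.Subgraph) :
    H.edgeSet = Sym2.map (Subtype.val) '' H.coe.edgeSet := by
  ext e
  induction e using Sym2.ind with
  | _ x y =>
    simp only [Subgraph.mem_edgeSet, Set.mem_image]
    constructor
    · intro h
      exact ⟨s(⟨x, H.edge_vert h⟩, ⟨y, H.edge_vert h.symm⟩), by simpa using h, rfl⟩
    · rintro ⟨e', he', heq⟩
      induction e' using Sym2.ind with
      | _ a b =>
        rw [Sym2.map_pair_eq] at heq
        have heq2 := Sym2.eq_iff.mp heq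
        rw [SimpleGraph.mem_edgeSet] at he'
        rw [Subgraph.coe_adj] at he'
        rcases heq2 with ⟨h1, h2⟩ | ⟨h1, h2⟩
        · rw [← h1, ← h2]; exact he'
        · rw [← h1, ← h2]; exact he'.symm


lemma ncard_coe_edgeSet {G : SimpleGraph V} (H : G.Subgraph) :
    H.coe.edgeSet.ncard = H.edgeSet.ncard := by
  rw [edgeSet_eq_image H, Set.ncard_image_of_injective _ (Sym2.map.injective Subtype.val_injective)]

lemma complete_of_choose_le {W : Type*} [Fintype W] (G' : SimpleGraph W)
    (h : (Fintype.card W).choose 2 ≤ G'.edgeSet.ncard) {x y : W} (hxy : x ≠ y) : G'.Adj x y := by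
  classical
  by_contra hadj
  have hne : G' ≠ ⊤ := by
    intro hEq
    exact hadj (by rw [hEq]; exact hxy)
  have hlt : G' < ⊤ := lt_of_le_of_ne le_top hne
  have hss : G'.edgeSet ⊂ (⊤ : SimpleGraph W).edgeSet := edgeSet_ssubset_edgeSet.2 hlt
  have hcard := Set.ncard_lt_ncard hss (Set.toFinite _)
  have htop : ((⊤ : SimpleGraph W).edgeSet).ncard = (Fintype.card W).choose 2 := by
    rw [Set.ncard_eq_toFinset_card', ← card_edgeFinset_top_eq_card_choose_two]
    exact congrArg Finset.card (Set.toFinset_congr rfl)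
  omega

lemma incident_ncard_le {G : SimpleGraph V} [Fintype V] (H : G.Subgraph) (v : V) :
    {e ∈ H.edgeSet | v ∈ e}.ncard ≤ (H.neighborSet v).ncard := by
  have hsub : {e ∈ H.edgeSet | v ∈ e} ⊆ (fun w => s(v, w)) '' H.neighborSet v := by
    rintro e ⟨he, hv⟩
    rcases Sym2.mem_iff_exists.1 hv with ⟨w, rfl⟩
    rw [Subgraph.mem_edgeSet] at he
    exact ⟨w, he, rfl⟩
  exact le_trans (Set.ncard_le_ncard hsub (Set.toFinite _)) (Set.ncard_image_le (Set.toFinite _))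

lemma edge_delete {G : SimpleGraph V} [Fintype V] (H : G.Subgraph) (v : V) :
    H.edgeSet.ncard ≤ (H.induce (H.verts \ {v})).edgeSet.ncard + (H.neighborSet v).ncard := by
  have hsub : H.edgeSet ⊆ (H.induce (H.verts \ {v})).edgeSet ∪ {e ∈ H.edgeSet | v ∈ e} := by
    intro e he
    induction e using Sym2.ind with
    | _ x y =>
      rw [Subgraph.mem_edgeSet] at he
      by_cases hv : v ∈ s(x, y)
      · exact Or.inr ⟨Subgraph.mem_edgeSet.2 he, hv⟩
      · simp only [Sym2.mem_iff, not_or] at hv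
        refine Or.inl (Subgraph.mem_edgeSet.2 ?_)
        exact ⟨⟨H.edge_vert he, fun h => hv.1 h.symm⟩, ⟨H.edge_vert he.symm, fun h => hv.2 h.symm⟩, he⟩
  calc H.edgeSet.ncard ≤ ((H.induce (H.verts \ {v})).edgeSet ∪ {e ∈ H.edgeSet | v ∈ e}).ncard :=
        Set.ncard_le_ncard hsub (Set.toFinite _)
    _ ≤ (H.induce (H.verts \ {v})).edgeSet.ncard + {e ∈ H.edgeSet | v ∈ e}.ncard :=
        Set.ncard_union_le _ _
    _ ≤ _ := by have := incident_ncard_le H v; omega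

lemma edge_split {G : SimpleGraph V} [Fintype V] (H : G.Subgraph) (A B : Set V)
    (h : ∀ x y, H.Adj x y → (x ∈ A ∧ y ∈ A) ∨ (x ∈ B ∧ y ∈ B)) :
    H.edgeSet.ncard ≤ (H.induce A).edgeSet.ncard + (H.induce B).edgeSet.ncard := by
  have hsub : H.edgeSet ⊆ (H.induce A).edgeSet ∪ (H.induce B).edgeSet := by
    intro e he
    induction e using Sym2.ind with
    | _ x y =>
      rw [Subgraph.mem_edgeSet] at he
      rcases h x y he with ⟨hx, hy⟩ | ⟨hx, hy⟩
      · exact Or.inl (Subgraph.mem_edgeSet.2 ⟨hx, hy, he⟩)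
      · exact Or.inr (Subgraph.mem_edgeSet.2 ⟨hx, hy, he⟩)
  exact le_trans (Set.ncard_le_ncard hsub (Set.toFinite _)) (Set.ncard_union_le _ _)

lemma mader_aux {V : Type u} [Fintype V] (G : SimpleGraph V) (k m : ℕ) (hk : 2 ≤ k)
    (hm : m + 3 = 2 * k) :
    ∀ n : ℕ, ∀ H : G.Subgraph, H.verts.ncard = n → 2 * k ≤ n + 1 →
      m * (n + 1) + 1 ≤ H.edgeSet.ncard + m * k →
      ∃ H' : G.Subgraph, IsKConnected H'.coe k := by
  classical
  intro n
  induction n using Nat.strong_induction_on with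
  | _ n IH =>
  intro H hn hnk hE
  have hcardverts : Nat.card ↥H.verts = n := by
    rw [Nat.card_coe_set_eq, hn]
  by_cases hbase : n + 1 = 2 * k
  · -- base case: H is complete on 2k-1 vertices
    refine ⟨H, ?_, ?_⟩
    · omega
    · intro S hS
      have hcompl : (Sᶜ : Set ↥H.verts).Nonempty := by
        rw [Set.nonempty_compl]
        intro huniv
        rw [huniv, Set.ncard_univ, hcardverts] at hS
        omega
      have hadj : ∀ x y : ↥H.verts, x ≠ y → H.coe.Adj x y := by
        intro x y hxy
        refine complete_of_choose_le H.coe ?_ hxy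
        have hcV : Fintype.card ↥H.verts = n := by
          rw [← Nat.card_eq_fintype_card, hcardverts]
        rw [hcV, ncard_coe_edgeSet]
        obtain ⟨j, rfl⟩ : ∃ j, k = j + 2 := ⟨k - 2, by omega⟩
        obtain rfl : m = 2 * j + 1 := by omega
        obtain rfl : n = 2 * j + 3 := by omega
        have hch : (2 * j + 3).choose 2 = (2 * j + 3) * (j + 1) := by
          rw [Nat.choose_two_right]
          have h1 : 2 * j + 3 - 1 = 2 * j + 2 := by omega
          rw [h1]
          have h2 : (2 * j + 3) * (2 * j + 2) = 2 * ((2 * j + 3) * (j + 1)) := by ring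
          rw [h2, Nat.mul_div_cancel_left _ (by norm_num : (0:ℕ) < 2)]
        rw [hch]
        have : (2 * j + 1) * ((2 * j + 3) + 1) + 1 = (2 * j + 3) * (j + 1) + (2 * j + 1) * (j + 2) := by
          ring
        omega
      rw [connected_iff]
      refine ⟨?_, hcompl.to_subtype⟩
      intro u v
      by_cases huv : u = v
      · rw [huv]
      · refine SimpleGraph.Adj.reachable ?_
        exact hadj u.1 v.1 (fun h => huv (Subtype.ext h))
  · -- inductive step: n ≥ 2k
    have hstep : 2 * k ≤ n := by omega
    by_cases hdeg : ∃ v ∈ H.verts, (H.neighborSet v).ncard ≤ m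
    · -- Case A: delete low-degree vertex
      obtain ⟨v, hv, hdv⟩ := hdeg
      obtain ⟨n', rfl⟩ : ∃ n', n = n' + 1 := ⟨n - 1, by omega⟩
      have hn' : (H.induce (H.verts \ {v})).verts.ncard = n' := by
        rw [Subgraph.induce_verts, Set.ncard_diff_singleton_of_mem hv, hn]
        omega
      refine IH n' (by omega) (H.induce (H.verts \ {v})) hn' (by omega) ?_
      have hdel := edge_delete H v
      have hkey : m * (n' + 1 + 1) = m * (n' + 1) + m := by ring
      have := hE
      omega
    · -- Case B: min degree ≥ m + 1 = 2k - 2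
      push_neg at hdeg
      by_cases hcon : IsKConnected H.coe k
      · exact ⟨H, hcon⟩
      have hklt : k < Nat.card ↥H.verts := by omega
      rw [IsKConnected] at hcon
      push_neg at hcon
      obtain ⟨S₀, hS₀, hncon⟩ := hcon hklt
      have hScomp : (S₀ᶜ : Set ↥H.verts).Nonempty := by
        rw [Set.nonempty_compl]
        intro huniv
        rw [huniv, Set.ncard_univ, hcardverts] at hS₀
        omega
      obtain ⟨a, b, hab⟩ : ∃ a b, ¬(H.coe.induce (S₀ᶜ : Set ↥H.verts)).Reachable a b := by
        by_contra hc
        push_neg at hc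
        exact hncon ((connected_iff _).mpr ⟨hc, hScomp.to_subtype⟩)
      set S : Set V := Subtype.val '' S₀ with hSdef
      set R : Set V := {x : V | ∃ (h : x ∈ H.verts) (h2 : (⟨x, h⟩ : ↥H.verts) ∈ (S₀ᶜ : Set ↥H.verts)),
        (H.coe.induce (S₀ᶜ : Set ↥H.verts)).Reachable ⟨⟨x, h⟩, h2⟩ a} with hRdef
      have hSsub : S ⊆ H.verts := by rintro x ⟨y, _, rfl⟩; exact y.2
      have hRsub : R ⊆ H.verts := by rintro x ⟨h, _⟩; exact h
      set A : Set V := S ∪ R with hAdef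
      set B : Set V := H.verts \ R with hBdef
      have hAsub : A ⊆ H.verts := Set.union_subset hSsub hRsub
      have hRnbr : ∀ x ∈ R, ∀ y, H.Adj x y → y ∈ A := by
        rintro x ⟨hx, hx2, hreach⟩ y hadj
        have hy : y ∈ H.verts := H.edge_vert hadj.symm
        by_cases hy0 : (⟨y, hy⟩ : ↥H.verts) ∈ S₀
        · exact Or.inl ⟨⟨y, hy⟩, hy0, rfl⟩
        · refine Or.inr ⟨hy, hy0, ?_⟩
          refine Reachable.trans (SimpleGraph.Adj.reachable ?_) hreach
          show H.coe.Adj _ _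
          exact hadj.symm
      have hsplit : ∀ x y, H.Adj x y → (x ∈ A ∧ y ∈ A) ∨ (x ∈ B ∧ y ∈ B) := by
        intro x y hadj
        by_cases hxR : x ∈ R
        · exact Or.inl ⟨Or.inr hxR, hRnbr x hxR y hadj⟩
        by_cases hyR : y ∈ R
        · exact Or.inl ⟨hRnbr y hyR x hadj.symm, Or.inr hyR⟩
        · exact Or.inr ⟨⟨H.edge_vert hadj, hxR⟩, ⟨H.edge_vert hadj.symm, hyR⟩⟩
      have haR : (a.1.1 : V) ∈ R := ⟨a.1.2, a.2, Reachable.refl a⟩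
      have hAcard : 2 * k ≤ A.ncard + 1 := by
        have hnb : insert (a.1.1 : V) (H.neighborSet a.1.1) ⊆ A := by
          rintro y (rfl | hy)
          · exact Or.inr haR
          · exact hRnbr _ haR y hy
        have hnotmem : (a.1.1 : V) ∉ H.neighborSet a.1.1 := fun h => H.loopless.irrefl _ h
        have h1 : (insert (a.1.1 : V) (H.neighborSet a.1.1)).ncard
            = (H.neighborSet a.1.1).ncard + 1 :=
          Set.ncard_insert_of_notMem hnotmem (Set.toFinite _)
        have h2 := Set.ncard_le_ncard hnb (Set.toFinite _)
        have h3 := hdeg _ a.1.2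
        omega
      have hbR : (b.1.1 : V) ∉ R := by
        rintro ⟨h, h2, hreach⟩
        exact hab hreach.symm
      have hbB : (b.1.1 : V) ∈ B := ⟨b.1.2, hbR⟩
      have hbnbr : ∀ y, H.Adj b.1.1 y → y ∈ B := by
        intro y hadj
        have hy : y ∈ H.verts := H.edge_vert hadj.symm
        refine ⟨hy, ?_⟩
        rintro ⟨hy', hy2, hreach⟩
        apply hbR
        refine ⟨b.1.2, b.2, ?_⟩
        refine Reachable.trans (SimpleGraph.Adj.reachable ?_) hreach
        show H.coe.Adj _ _
        exact hadj
      have hBcard : 2 * k ≤ B.ncard + 1 := by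
        have hnb : insert (b.1.1 : V) (H.neighborSet b.1.1) ⊆ B := by
          rintro y (rfl | hy)
          · exact hbB
          · exact hbnbr y hy
        have hnotmem : (b.1.1 : V) ∉ H.neighborSet b.1.1 := fun h => H.loopless.irrefl _ h
        have h1 : (insert (b.1.1 : V) (H.neighborSet b.1.1)).ncard
            = (H.neighborSet b.1.1).ncard + 1 :=
          Set.ncard_insert_of_notMem hnotmem (Set.toFinite _)
        have h2 := Set.ncard_le_ncard hnb (Set.toFinite _)
        have h3 := hdeg _ b.1.2
        omega
      have hbS : (b.1.1 : V) ∉ S := by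
        rintro ⟨y, hy, hyx⟩
        exact b.2 (by rwa [show y = b.1 from Subtype.ext hyx] at hy)
      have hAlt : A.ncard < n := by
        have hss : A ⊂ H.verts := by
          refine ⟨hAsub, fun hsub => ?_⟩
          rcases hsub b.1.2 with hS | hR
          · exact hbS hS
          · exact hbR hR
        have := Set.ncard_lt_ncard hss (Set.toFinite _)
        omega
      have hBlt : B.ncard < n := by
        have hss : B ⊂ H.verts := by
          refine ⟨Set.diff_subset, fun hsub => ?_⟩
          exact (hsub a.1.2).2 haR
        have := Set.ncard_lt_ncard hss (Set.toFinite _)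
        omega
      have hunion : A ∪ B = H.verts := by
        apply Set.Subset.antisymm (Set.union_subset hAsub Set.diff_subset)
        intro x hx
        by_cases hxR : x ∈ R
        · exact Or.inl (Or.inr hxR)
        · exact Or.inr ⟨hx, hxR⟩
      have hinter : A ∩ B ⊆ S := by
        rintro x ⟨hxA, _, hxR⟩
        rcases hxA with h | h
        · exact h
        · exact absurd h hxR
      have hScard : S.ncard < k := by
        rw [hSdef, Set.ncard_image_of_injective _ Subtype.val_injective]; exact hS₀
      have hsum : A.ncard + B.ncard + 1 ≤ n + k := by
        have h1 := Set.ncard_union_add_ncard_inter A B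
        have h2 : (A ∩ B).ncard ≤ S.ncard := Set.ncard_le_ncard hinter (Set.toFinite _)
        rw [hunion, hn] at h1
        omega
      have hesplit := edge_split H A B hsplit
      by_cases hA1 : m * (A.ncard + 1) + 1 ≤ (H.induce A).edgeSet.ncard + m * k
      · exact IH A.ncard (by omega) (H.induce A) (by rw [Subgraph.induce_verts]) hAcard hA1
      by_cases hB1 : m * (B.ncard + 1) + 1 ≤ (H.induce B).edgeSet.ncard + m * k
      · exact IH B.ncard (by omega) (H.induce B) (by rw [Subgraph.induce_verts]) hBcard hB1
      exfalso
      push_neg at hA1 hB1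
      have c1 : m * (A.ncard + 1) + m * (B.ncard + 1) = m * (A.ncard + B.ncard + 2) := by ring
      have c2 : m * (A.ncard + B.ncard + 2) ≤ m * (n + k + 1) :=
        Nat.mul_le_mul_left m (by omega)
      have c3 : m * (n + k + 1) = m * (n + 1) + m * k := by ring
      have hm0 : 1 ≤ m := by omega
      have c4 : m * k ≥ 1 := Nat.one_le_iff_ne_zero.mpr (by positivity)
      linarith

/-- Every non-null graph G contains a subgraph H with vertex
connectivity κ(H) ≥ d(G)/2. -/
theorem mader_connected_subgraph (V : Type u) [Fintype V] [Nonempty V]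
    (G : SimpleGraph V) :
    ∃ H : G.Subgraph, IsKConnected H.coe ⌈GraphDensity G / 2⌉₊ := by
  
  classical
  generalize hkdef : ⌈GraphDensity G / 2⌉₊ = k
  by_cases hk0 : k = 0
  · refine ⟨⊤, ?_, ?_⟩
    · rw [hk0]
      rw [Nat.card_coe_set_eq, Subgraph.verts_top, Set.ncard_univ, Nat.card_eq_fintype_card]
      exact Fintype.card_pos
    · intro S hS
      rw [hk0] at hS
      exact absurd hS (Nat.not_lt_zero _)
  by_cases hk1 : k = 1
  · have hepos : Nat.card G.edgeSet ≠ 0 := by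
      intro h0
      have : (0:ℝ) < GraphDensity G / 2 := Nat.ceil_pos.mp (by rw [hkdef]; omega)
      rw [GraphDensity, h0] at this
      norm_num at this
    have hne : Nonempty G.edgeSet := (Nat.card_ne_zero.mp hepos).1
    have hadj : ∃ u v, G.Adj u v := by
      obtain ⟨⟨e, he⟩⟩ := hne
      induction e using Sym2.ind with
      | _ u v => exact ⟨u, v, he⟩
    obtain ⟨u, v, huv⟩ := hadj
    refine ⟨G.subgraphOfAdj huv, ?_, ?_⟩
    · rw [hk1, Nat.card_coe_set_eq]
      simp only [subgraphOfAdj_verts]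
      rw [Set.ncard_pair huv.ne]
      omega
    · intro S hS
      rw [hk1] at hS
      have hSempty : S = ∅ := (Set.ncard_eq_zero (Set.toFinite S)).mp (by omega)
      subst hSempty
      rw [connected_iff]
      constructor
      · intro x y
        by_cases hxy : x = y
        · rw [hxy]
        · refine SimpleGraph.Adj.reachable ?_
          show (G.subgraphOfAdj huv).coe.Adj x.1 y.1
          have hx := x.1.2
          have hy := y.1.2
          simp only [subgraphOfAdj_verts, Set.mem_insert_iff, Set.mem_singleton_iff] at hx hy
          have hne' : (x.1.1 : V) ≠ y.1.1 := fun h => hxy (Subtype.ext (Subtype.ext h))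
          rw [Subgraph.coe_adj]
          simp only [subgraphOfAdj_adj]
          rcases hx with hx | hx <;> rcases hy with hy | hy
          · exact absurd (hx.trans hy.symm) hne'
          · rw [hx, hy]
          · rw [hx, hy]; exact Sym2.eq_swap
          · exact absurd (hx.trans hy.symm) hne'
      · refine ⟨⟨⟨u, ?_⟩, ?_⟩⟩
        · simp
        · simp
  · -- 2 ≤ k
    have hk2 : 2 ≤ k := by omega
    obtain ⟨j, rfl⟩ : ∃ j, k = j + 2 := ⟨k - 2, by omega⟩
    obtain ⟨nV, hnV⟩ : ∃ x, Fintype.card V = x := ⟨_, rfl⟩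
    have hnV0 : 0 < nV := hnV ▸ Fintype.card_pos
    have hNat : Nat.card V = nV := by rw [Nat.card_eq_fintype_card, hnV]
    obtain ⟨e, hedef⟩ : ∃ x, G.edgeSet.ncard = x := ⟨_, rfl⟩
    have hcardE : Nat.card G.edgeSet = e := by rw [Nat.card_coe_set_eq, hedef]
    have hlt : ((j + 1 : ℕ) : ℝ) < GraphDensity G / 2 := Nat.lt_ceil.mp (by rw [hkdef]; omega)
    have hE0 : (j + 1) * (nV * 2) < e := by
      rw [GraphDensity, hcardE, hNat, div_div] at hlt
      have hpos : (0:ℝ) < (nV:ℝ) * 2 := by positivity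
      have h2 := (lt_div_iff₀ hpos).mp hlt
      exact_mod_cast h2
    have hchoose : e ≤ nV.choose 2 := by
      rw [← hedef, Set.ncard_eq_toFinset_card', ← hnV]
      exact card_edgeFinset_le_card_choose_two
    have h2e : 2 * e ≤ nV * (nV - 1) := by
      rw [Nat.choose_two_right] at hchoose
      have := Nat.div_mul_le_self (nV * (nV - 1)) 2
      omega
    obtain ⟨w, rfl⟩ : ∃ w, nV = w + 1 := ⟨nV - 1, by omega⟩
    have hw : 2 * j + 2 ≤ w := by
      by_contra hcon
      push_neg at hcon
      have h5 : (w + 1) * w ≤ (w + 1) * (2 * j + 1) := Nat.mul_le_mul_left _ (by omega)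
      have h6 : (w + 1) - 1 = w := by omega
      rw [h6] at h2e
      nlinarith
    refine mader_aux G (j + 2) (2 * j + 1) (by omega) (by omega) (w + 1) ⊤ ?_ (by omega) ?_
    · rw [Subgraph.verts_top, Set.ncard_univ, hNat]
    · show (2 * j + 1) * (w + 1 + 1) + 1 ≤ ((⊤ : G.Subgraph)).edgeSet.ncard + (2 * j + 1) * (j + 2)
      have : ((⊤ : G.Subgraph)).edgeSet.ncard = e := hedef
      rw [this]
      nlinarith
end

section
/- Every non-null graph G contains a bipartite subgraph H with vertex connectivity κ(H) ≥ max{ d(G)/4, (χ(G) − 1)/8 }, where d(G) is the density of G and χ(G) its chromatic number. -/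
open SimpleGraph

universe u v

/- ======================= auxiliary development ======================= -/

section Aux

set_option linter.unusedSectionVars false

open Finset

variable {V' : Type u} [Fintype V'] [DecidableEq V']

/-- count of ordered adjacent pairs inside `S` -/
def Dcnt (B : SimpleGraph V') [DecidableRel B.Adj] (S : Finset V') : ℕ :=
  ((S ×ˢ S).filter fun p => B.Adj p.1 p.2).card

/-- number of neighbours of `v` inside `S` -/
def degIn (B : SimpleGraph V') [DecidableRel B.Adj] (S : Finset V') (v : V') : ℕ :=
  (S.filter fun w => B.Adj v w).card

lemma Dcnt_eq_sum (B : SimpleGraph V') [DecidableRel B.Adj] (S : Finset V') :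
    Dcnt B S = ∑ v ∈ S, degIn B S v := by
  classical
  unfold Dcnt degIn
  rw [Finset.card_filter, Finset.sum_product]
  congr 1; ext v
  rw [Finset.card_filter]

lemma Dcnt_le (B : SimpleGraph V') [DecidableRel B.Adj] (S : Finset V') :
    Dcnt B S ≤ S.card * (S.card - 1) := by
  classical
  have h : ((S ×ˢ S).filter fun p => B.Adj p.1 p.2) ⊆ S.offDiag := by
    intro p hp
    simp only [Finset.mem_filter, Finset.mem_product] at hp
    exact Finset.mem_offDiag.2 ⟨hp.1.1, hp.1.2, hp.2.ne⟩
  calc _ ≤ S.offDiag.card := Finset.card_le_card h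
    _ = _ := by rw [Finset.offDiag_card, Nat.mul_sub_one]

lemma Dcnt_erase (B : SimpleGraph V') [DecidableRel B.Adj] (S : Finset V') (v : V')
    (hv : v ∈ S) :
    Dcnt B S = Dcnt B (S.erase v) + 2 * degIn B S v := by
  classical
  set X := (S ×ˢ S).filter fun p => B.Adj p.1 p.2 with hX
  have h1 : X.card = (X.filter fun p => p.1 = v).card + (X.filter fun p => ¬ p.1 = v).card :=
    (Finset.card_filter_add_card_filter_not _).symm
  have h2 : (X.filter fun p => ¬ p.1 = v).card
      = ((X.filter fun p => ¬ p.1 = v).filter fun p => p.2 = v).card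
        + ((X.filter fun p => ¬ p.1 = v).filter fun p => ¬ p.2 = v).card :=
    (Finset.card_filter_add_card_filter_not _).symm
  have e1 : (X.filter fun p => p.1 = v).card = degIn B S v := by
    unfold degIn
    refine Finset.card_bij' (fun p _ => p.2) (fun w _ => (v, w)) ?hi ?hj ?li ?ri
    case hi =>
      rintro ⟨a,b⟩ hp
      simp only [hX, Finset.mem_filter, Finset.mem_product] at hp
      obtain ⟨⟨⟨-, hb⟩, hadj⟩, rfl⟩ := hp
      exact Finset.mem_filter.2 ⟨hb, hadj⟩
    case hj =>
      intro w hw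
      rw [Finset.mem_filter] at hw
      simp only [hX, Finset.mem_filter, Finset.mem_product]
      exact ⟨⟨⟨hv, hw.1⟩, hw.2⟩, trivial⟩
    case li =>
      rintro ⟨a,b⟩ hp
      rw [Finset.mem_filter] at hp
      simp [hp.2]
      exact hp.2.symm
    case ri => intro w hw; rfl
  have e2 : ((X.filter fun p => ¬ p.1 = v).filter fun p => p.2 = v).card = degIn B S v := by
    unfold degIn
    refine Finset.card_bij' (fun p _ => p.1) (fun w _ => (w, v)) ?hi ?hj ?li ?ri
    case hi =>
      rintro ⟨a,b⟩ hp
      simp only [hX, Finset.mem_filter, Finset.mem_product] at hp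
      obtain ⟨⟨⟨⟨ha, -⟩, hadj⟩, -⟩, rfl⟩ := hp
      exact Finset.mem_filter.2 ⟨ha, hadj.symm⟩
    case hj =>
      intro w hw
      rw [Finset.mem_filter] at hw
      simp only [hX, Finset.mem_filter, Finset.mem_product]
      exact ⟨⟨⟨⟨hw.1, hv⟩, hw.2.symm⟩, hw.2.ne'⟩, trivial⟩
    case li =>
      rintro ⟨a,b⟩ hp
      rw [Finset.mem_filter, Finset.mem_filter] at hp
      simp [hp.2]
      exact hp.2.symm
    case ri => intro w hw; rfl
  have e3 : ((X.filter fun p => ¬ p.1 = v).filter fun p => ¬ p.2 = v).card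
      = Dcnt B (S.erase v) := by
    unfold Dcnt
    congr 1
    ext ⟨a,b⟩
    simp only [hX, Finset.mem_filter, Finset.mem_product, Finset.mem_erase]
    tauto
  show X.card = _
  omega

/-- the bipartite graph induced by a 2-coloring `c` -/
def cutG (G : SimpleGraph V') (c : V' → Bool) : SimpleGraph V' where
  Adj x y := G.Adj x y ∧ c x ≠ c y
  symm := ⟨fun _ _ ⟨h, hne⟩ => ⟨h.symm, hne.symm⟩⟩
  loopless := ⟨fun x ⟨h, _⟩ => G.irrefl h⟩

instance (G : SimpleGraph V') [DecidableRel G.Adj] (c : V' → Bool) :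
    DecidableRel (cutG G c).Adj := fun _ _ => instDecidableAnd

lemma cutG_adj (G : SimpleGraph V') (c : V' → Bool) (x y : V') :
    (cutG G c).Adj x y ↔ G.Adj x y ∧ c x ≠ c y := Iff.rfl

lemma Dcnt_cut_congr (G : SimpleGraph V') [DecidableRel G.Adj] (c c' : V' → Bool)
    (W : Finset V') (h : ∀ w ∈ W, c w = c' w) :
    Dcnt (cutG G c) W = Dcnt (cutG G c') W := by
  unfold Dcnt
  congr 1
  apply Finset.filter_congr
  rintro ⟨a, b⟩ hab
  rw [Finset.mem_product] at hab
  rw [cutG_adj, cutG_adj, h a hab.1, h b hab.2]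

/-- max-cut : some 2-coloring captures at least half of the (ordered) edges inside `W`. -/
lemma maxcut (G : SimpleGraph V') [DecidableRel G.Adj] (W : Finset V') :
    ∃ c : V' → Bool, Dcnt G W ≤ 2 * Dcnt (cutG G c) W := by
  classical
  induction W using Finset.induction_on with
  | empty => exact ⟨fun _ => true, by simp [Dcnt]⟩
  | @insert v W' hv IH =>
    obtain ⟨c, hc⟩ := IH
    set dt := (W'.filter fun w => G.Adj v w ∧ c w = true).card with hdt
    set df := (W'.filter fun w => G.Adj v w ∧ c w = false).card with hdf
    set b := if dt ≤ df then true else false with hb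
    set c' := Function.update c v b with hc'
    refine ⟨c', ?_⟩
    have hvins : v ∈ insert v W' := Finset.mem_insert_self v W'
    have hins : (insert v W').erase v = W' := Finset.erase_insert hv
    have h1 : Dcnt G (insert v W') = Dcnt G W' + 2 * degIn G (insert v W') v := by
      rw [Dcnt_erase G _ v hvins, hins]
    have h1' : degIn G (insert v W') v = degIn G W' v := by
      unfold degIn
      rw [Finset.filter_insert, if_neg (G.irrefl)]
    have h2 : Dcnt (cutG G c') (insert v W')
        = Dcnt (cutG G c') W' + 2 * degIn (cutG G c') (insert v W') v := by
      rw [Dcnt_erase _ _ v hvins, hins]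
    have h2' : degIn (cutG G c') (insert v W') v = degIn (cutG G c') W' v := by
      unfold degIn
      rw [Finset.filter_insert, if_neg ((cutG G c').irrefl)]
    have h3 : Dcnt (cutG G c') W' = Dcnt (cutG G c) W' :=
      Dcnt_cut_congr G c' c W' (fun w hw => by
        rw [hc', Function.update_of_ne (by rintro rfl; exact hv hw)])
    have hsplit : degIn G W' v = dt + df := by
      unfold degIn
      rw [hdt, hdf, ← Finset.filter_filter, ← Finset.filter_filter]
      rw [← Finset.card_filter_add_card_filter_not (s := W'.filter fun w => G.Adj v w)
        (p := fun w => c w = true)]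
      congr 1
      apply Finset.card_nbij id (fun a ha => ?_) (fun a ha b hb hab => hab) (fun a ha => ?_)
      · simp only [Finset.mem_filter, Bool.not_eq_true] at *
        simpa using ha
      · simp only [Finset.coe_filter, Set.mem_setOf_eq, Set.mem_image, Bool.not_eq_true,
          Bool.not_eq_false] at *
        exact ⟨a, ⟨ha.1, by simp [ha.2]⟩, rfl⟩
    have hcross : degIn (cutG G c') W' v = if b = true then df else dt := by
      unfold degIn
      have : ∀ w ∈ W', ((cutG G c').Adj v w ↔ (G.Adj v w ∧ c w ≠ b)) := by
        intro w hw
        rw [cutG_adj, hc']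
        rw [Function.update_self, Function.update_of_ne (by rintro rfl; exact hv hw)]
        exact and_congr_right (fun _ => ne_comm)
      rw [Finset.filter_congr this]
      by_cases hbt : b = true
      · simp only [hbt, if_pos]
        rw [hdf]
        congr 1
        apply Finset.filter_congr
        intro w _
        simp [hbt, Bool.not_eq_true]
      · have hbf : b = false := by revert hbt; cases b <;> simp
        simp only [hbt, if_neg, hbf]
        rw [hdt]
        congr 1
        apply Finset.filter_congr
        intro w _
        simp [hbf]
    have hchoice : dt + df ≤ 2 * degIn (cutG G c') W' v := by
      rw [hcross, hb]
      by_cases h : dt ≤ df <;> simp [h] <;> omega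
    omega

/-- a graph all of whose nonempty "induced subgraphs" have a vertex of small degree
is colorable -/
lemma colorable_of_degen (G : SimpleGraph V') [DecidableRel G.Adj] (c : ℕ) (hc : 0 < c)
    (h : ∀ W : Finset V', W.Nonempty → ∃ v ∈ W, degIn G W v < c) : G.Colorable c := by
  classical
  suffices H : ∀ W : Finset V', ∃ f : V' → Fin c, ∀ x ∈ W, ∀ y ∈ W, G.Adj x y → f x ≠ f y by
    obtain ⟨f, hf⟩ := H Finset.univ
    exact ⟨SimpleGraph.Coloring.mk f (fun {a b} hab =>
      hf a (Finset.mem_univ a) b (Finset.mem_univ b) hab)⟩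
  intro W
  induction W using Finset.strongInduction with
  | _ W IH =>
    rcases W.eq_empty_or_nonempty with rfl | hW
    · exact ⟨fun _ => ⟨0, hc⟩, by simp⟩
    obtain ⟨v, hv, hdeg⟩ := h W hW
    obtain ⟨f, hf⟩ := IH (W.erase v) (Finset.erase_ssubset hv)
    have hN : ((W.erase v).filter fun w => G.Adj v w) = W.filter fun w => G.Adj v w := by
      ext w
      simp only [Finset.mem_filter, Finset.mem_erase]
      constructor
      · rintro ⟨⟨-, hw⟩, ha⟩; exact ⟨hw, ha⟩
      · rintro ⟨hw, ha⟩; exact ⟨⟨ha.ne', hw⟩, ha⟩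
    obtain ⟨k, hk⟩ : ∃ k : Fin c, k ∉ ((W.erase v).filter fun w => G.Adj v w).image f := by
      by_contra hcon
      push_neg at hcon
      have hsub : (Finset.univ : Finset (Fin c)) ⊆ _ := fun k _ => hcon k
      have := Finset.card_le_card hsub
      have h2 := Finset.card_image_le (s := (W.erase v).filter fun w => G.Adj v w) (f := f)
      rw [hN] at h2 this
      simp only [Finset.card_univ, Fintype.card_fin] at this
      unfold degIn at hdeg
      omega
    refine ⟨Function.update f v k, ?_⟩
    intro x hx y hy hadj
    by_cases hxv : x = v
    · by_cases hyv : y = v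
      · subst hxv; subst hyv; exact absurd hadj (G.irrefl)
      · subst hxv
        rw [Function.update_self, Function.update_of_ne hyv]
        intro he
        exact hk (Finset.mem_image.2 ⟨y, Finset.mem_filter.2
          ⟨Finset.mem_erase.2 ⟨hyv, hy⟩, hadj⟩, he.symm⟩)
    · by_cases hyv : y = v
      · subst hyv
        rw [Function.update_self, Function.update_of_ne hxv]
        intro he
        exact hk (Finset.mem_image.2 ⟨x, Finset.mem_filter.2
          ⟨Finset.mem_erase.2 ⟨hxv, hx⟩, hadj.symm⟩, he⟩)
      · rw [Function.update_of_ne hxv, Function.update_of_ne hyv]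
        exact hf x (Finset.mem_erase.2 ⟨hxv, hx⟩) y (Finset.mem_erase.2 ⟨hyv, hy⟩) hadj

lemma connected_induce_induce (B : SimpleGraph V') (A : Set V') (C : Set ↥A)
    (h : (B.induce (Subtype.val '' C)).Connected) : ((B.induce A).induce C).Connected := by
  have e : ((B.induce A).induce C) ≃g (B.induce (Subtype.val '' C)) :=
    { toEquiv := Equiv.Set.image Subtype.val C Subtype.val_injective
      map_rel_iff' := by
        rintro ⟨⟨x, hxA⟩, hxC⟩ ⟨⟨y, hyA⟩, hyC⟩
        simp [Equiv.Set.image, Equiv.Set.imageOfInjOn, comap_adj] }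
  exact e.connected_iff.mpr h

/-- Mader's theorem: a graph with a dense enough finite vertex subset
contains a (k+1)-connected induced subgraph -/
theorem mader (B : SimpleGraph V') [DecidableRel B.Adj] (k : ℕ) (hk : 1 ≤ k) :
    ∀ (n : ℕ) (S : Finset V'), S.card = n → 2 * k ≤ S.card →
      4 * k * (S.card - k) < Dcnt B S →
      ∃ R : Finset V', IsKConnected (B.induce (R : Set V')) (k + 1) := by
  intro n
  induction n using Nat.strong_induction_on with
  | _ n IH =>
  intro S hSn hcard hdense
  subst hSn
  by_cases hex : ∃ S' : Finset V', S'.card < S.card ∧ 2 * k ≤ S'.card ∧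
      4 * k * (S'.card - k) < Dcnt B S'
  · obtain ⟨S', h1, h2, h3⟩ := hex
    exact IH S'.card h1 S' rfl h2 h3
  push_neg at hex
  have hmin : ∀ S' : Finset V', S'.card < S.card → 2 * k ≤ S'.card →
      Dcnt B S' ≤ 4 * k * (S'.card - k) := hex
  -- Step 1 : 2k < |S|
  have hstep1 : 2 * k < S.card := by
    rcases Nat.lt_or_ge (2*k) S.card with h | h
    · exact h
    · exfalso
      have hSc : S.card = 2 * k := le_antisymm h hcard
      have hle := Dcnt_le B S
      rw [hSc] at hle hdense
      have e1 : 2 * k - k = k := by omega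
      rw [e1] at hdense
      have e2 : 2 * k * (2 * k - 1) + 2 * k * 1 = 2 * k * (2 * k) := by
        rw [← Nat.mul_add]
        congr 1
        omega
      have e3 : 2 * k * (2 * k) = 4 * k * k := by ring
      omega
  -- Step 2 : min degree ≥ 2k + 1
  have hdeg : ∀ v ∈ S, 2 * k + 1 ≤ degIn B S v := by
    intro v hv
    by_contra hcon
    push_neg at hcon
    have herase := Dcnt_erase B S v hv
    have hcard' : (S.erase v).card = S.card - 1 := Finset.card_erase_of_mem hv
    have h2k : 2 * k ≤ (S.erase v).card := by omega
    have hm := hmin (S.erase v) (by omega) h2k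
    rw [hcard'] at hm
    have e : (S.card - 1 - k) + 1 = S.card - k := by omega
    have e2 : 4 * k * (S.card - 1 - k) + 4 * k = 4 * k * (S.card - k) := by
      calc 4 * k * (S.card - 1 - k) + 4 * k = 4 * k * ((S.card - 1 - k) + 1) := by ring
        _ = 4 * k * (S.card - k) := by rw [e]
    omega
  -- Step 2b : |S| ≥ 2k + 2
  have hstep2b : 2 * k + 2 ≤ S.card := by
    have hne : S.Nonempty := Finset.card_pos.mp (by omega)
    obtain ⟨v, hv⟩ := hne
    have hsub : (S.filter fun w => B.Adj v w) ⊆ S.erase v := by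
      intro w hw
      rw [Finset.mem_filter] at hw
      exact Finset.mem_erase.2 ⟨hw.2.ne', hw.1⟩
    have := Finset.card_le_card hsub
    have h1 := hdeg v hv
    unfold degIn at h1
    have := Finset.card_erase_of_mem hv
    omega
  refine ⟨S, ?_, ?_⟩
  · rw [Nat.card_coe_set_eq, Set.ncard_coe_finset]
    omega
  intro U hU
  classical
  have hUfin : (Subtype.val '' U).Finite := Set.toFinite _
  set T : Finset V' := hUfin.toFinset with hTdef
  have hTmem : ∀ x, x ∈ T ↔ x ∈ Subtype.val '' U := fun x => Set.Finite.mem_toFinset _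
  have hTS : T ⊆ S := by
    intro x hx
    obtain ⟨⟨z, hz⟩, -, rfl⟩ := (hTmem x).1 hx
    exact Finset.mem_coe.mp hz
  have hTcard : T.card ≤ k := by
    have h1 : T.card = (Subtype.val '' U).ncard := by
      rw [Set.ncard_eq_toFinset_card _ hUfin]
    have h2 : (Subtype.val '' U).ncard = U.ncard :=
      Set.ncard_image_of_injective _ Subtype.val_injective
    omega
  have himg : Subtype.val '' (Uᶜ) = (↑(S \ T) : Set V') := by
    ext z
    simp only [Set.mem_image, Finset.coe_sdiff, Set.mem_diff, Finset.mem_coe]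
    constructor
    · rintro ⟨⟨w, hw⟩, hwc, rfl⟩
      refine ⟨Finset.mem_coe.mp hw, fun hzT => ?_⟩
      obtain ⟨u, hu, hu2⟩ := (hTmem w).1 hzT
      apply hwc
      have : u = ⟨w, hw⟩ := Subtype.ext hu2
      rwa [this] at hu
    · rintro ⟨hzS, hzT⟩
      refine ⟨⟨z, Finset.mem_coe.mpr hzS⟩, fun hc => hzT ((hTmem z).2 ⟨_, hc, rfl⟩), rfl⟩
  apply connected_induce_induce
  rw [himg]
  set A : Set V' := (↑(S \ T) : Set V') with hAdef
  rw [connected_iff]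
  have hSTcard : (S \ T).card ≥ S.card - k := by
    have := Finset.le_card_sdiff T S
    omega
  have hSTne : (S \ T).Nonempty := Finset.card_pos.mp (by omega)
  refine ⟨?_, ?_⟩
  swap
  · obtain ⟨z, hz⟩ := hSTne
    exact ⟨⟨z, Finset.mem_coe.mpr hz⟩⟩
  intro a b
  by_contra hreach
  set U₁' : Finset V' := (S \ T).filter
    (fun z => ∃ h : z ∈ A, (B.induce A).Reachable a ⟨z, h⟩) with hU1def
  have hclose : ∀ z ∈ U₁', ∀ w ∈ S \ T, B.Adj z w → w ∈ U₁' := by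
    intro z hz w hw hadj
    rw [hU1def, Finset.mem_filter] at hz ⊢
    obtain ⟨hz1, hz2, hz3⟩ := hz
    refine ⟨hw, Finset.mem_coe.mpr hw, ?_⟩
    exact hz3.trans (SimpleGraph.Adj.reachable (by simpa [comap_adj] using hadj))
  have ha1 : (a : V') ∈ U₁' := by
    rw [hU1def, Finset.mem_filter]
    exact ⟨Finset.mem_coe.mp a.2, a.2, by rw [Subtype.coe_eta]⟩
  have hb1 : (b : V') ∉ U₁' := by
    rw [hU1def, Finset.mem_filter]
    rintro ⟨h1, h2, h3⟩
    rw [Subtype.coe_eta] at h3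
    exact hreach h3
  set U₁ : Finset V' := U₁' ∪ T with hU1
  set U₂ : Finset V' := ((S \ T) \ U₁') ∪ T with hU2
  have hU1sub : U₁' ⊆ S \ T := Finset.filter_subset _ _
  have hsub : ((S ×ˢ S).filter fun p => B.Adj p.1 p.2) ⊆
      ((U₁ ×ˢ U₁).filter fun p => B.Adj p.1 p.2) ∪
      ((U₂ ×ˢ U₂).filter fun p => B.Adj p.1 p.2) := by
    rintro ⟨x, y⟩ hp
    simp only [Finset.mem_filter, Finset.mem_product] at hp
    obtain ⟨⟨hxS, hyS⟩, hadj⟩ := hp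
    simp only [Finset.mem_union, Finset.mem_filter, Finset.mem_product]
    have hy3 : y ∈ T ∨ y ∈ U₁' ∨ y ∈ (S \ T) \ U₁' := by
      by_cases hyT : y ∈ T
      · exact Or.inl hyT
      by_cases hyU : y ∈ U₁'
      · exact Or.inr (Or.inl hyU)
      · exact Or.inr (Or.inr (Finset.mem_sdiff.2 ⟨Finset.mem_sdiff.2 ⟨hyS, hyT⟩, hyU⟩))
    by_cases hx1 : x ∈ U₁'
    · rcases hy3 with hyT | hyU | hyR
      · exact Or.inl ⟨⟨Finset.mem_union_left _ hx1, Finset.mem_union_right _ hyT⟩, hadj⟩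
      · exact Or.inl ⟨⟨Finset.mem_union_left _ hx1, Finset.mem_union_left _ hyU⟩, hadj⟩
      · have : y ∈ U₁' := hclose x hx1 y (Finset.mem_sdiff.1 hyR).1 hadj
        exact absurd this (Finset.mem_sdiff.1 hyR).2
    by_cases hxT : x ∈ T
    · rcases hy3 with hyT | hyU | hyR
      · exact Or.inl ⟨⟨Finset.mem_union_right _ hxT, Finset.mem_union_right _ hyT⟩, hadj⟩
      · exact Or.inl ⟨⟨Finset.mem_union_right _ hxT, Finset.mem_union_left _ hyU⟩, hadj⟩
      · exact Or.inr ⟨⟨Finset.mem_union_right _ hxT, Finset.mem_union_left _ hyR⟩, hadj⟩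
    · have hxR : x ∈ (S \ T) \ U₁' :=
        Finset.mem_sdiff.2 ⟨Finset.mem_sdiff.2 ⟨hxS, hxT⟩, hx1⟩
      rcases hy3 with hyT | hyU | hyR
      · exact Or.inr ⟨⟨Finset.mem_union_left _ hxR, Finset.mem_union_right _ hyT⟩, hadj⟩
      · exfalso
        have : x ∈ U₁' := hclose y hyU x (Finset.mem_sdiff.1 hxR).1 hadj.symm
        exact hx1 this
      · exact Or.inr ⟨⟨Finset.mem_union_left _ hxR, Finset.mem_union_left _ hyR⟩, hadj⟩
  have hDsplit : Dcnt B S ≤ Dcnt B U₁ + Dcnt B U₂ :=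
    le_trans (Finset.card_le_card hsub) (Finset.card_union_le _ _)
  have hU1big : 2 * k + 2 ≤ U₁.card := by
    have hsub2 : insert (a : V') (S.filter fun w => B.Adj (a : V') w) ⊆ U₁ := by
      intro w hw
      rcases Finset.mem_insert.1 hw with rfl | hw
      · exact Finset.mem_union_left _ ha1
      rw [Finset.mem_filter] at hw
      by_cases hwT : w ∈ T
      · exact Finset.mem_union_right _ hwT
      · refine Finset.mem_union_left _ (hclose _ ha1 w (Finset.mem_sdiff.2 ⟨hw.1, hwT⟩) hw.2)
    have hnotmem : (a : V') ∉ (S.filter fun w => B.Adj (a : V') w) := by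
      rw [Finset.mem_filter]
      rintro ⟨-, hadj⟩
      exact B.irrefl hadj
    have hc := Finset.card_le_card hsub2
    rw [Finset.card_insert_of_notMem hnotmem] at hc
    have haS : (a : V') ∈ S := (Finset.mem_sdiff.1 (Finset.mem_coe.mp a.2)).1
    have := hdeg (a : V') haS
    unfold degIn at this
    omega
  have hU2big : 2 * k + 2 ≤ U₂.card := by
    have hbR : (b : V') ∈ (S \ T) \ U₁' :=
      Finset.mem_sdiff.2 ⟨Finset.mem_coe.mp b.2, hb1⟩
    have hsub2 : insert (b : V') (S.filter fun w => B.Adj (b : V') w) ⊆ U₂ := by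
      intro w hw
      rcases Finset.mem_insert.1 hw with rfl | hw
      · exact Finset.mem_union_left _ hbR
      rw [Finset.mem_filter] at hw
      by_cases hwT : w ∈ T
      · exact Finset.mem_union_right _ hwT
      · have hwST : w ∈ S \ T := Finset.mem_sdiff.2 ⟨hw.1, hwT⟩
        by_cases hwU : w ∈ U₁'
        · exfalso
          exact hb1 (hclose w hwU (b : V') (Finset.mem_coe.mp b.2) hw.2.symm)
        · exact Finset.mem_union_left _ (Finset.mem_sdiff.2 ⟨hwST, hwU⟩)
    have hnotmem : (b : V') ∉ (S.filter fun w => B.Adj (b : V') w) := by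
      rw [Finset.mem_filter]
      rintro ⟨-, hadj⟩
      exact B.irrefl hadj
    have hc := Finset.card_le_card hsub2
    rw [Finset.card_insert_of_notMem hnotmem] at hc
    have hbS : (b : V') ∈ S := (Finset.mem_sdiff.1 (Finset.mem_coe.mp b.2)).1
    have := hdeg (b : V') hbS
    unfold degIn at this
    omega
  have hU1lt : U₁.card < S.card := by
    have hsub2 : U₁ ⊆ S.erase (b : V') := by
      intro w hw
      rcases Finset.mem_union.1 hw with hw | hw
      · refine Finset.mem_erase.2 ⟨?_, (Finset.mem_sdiff.1 (hU1sub hw)).1⟩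
        rintro rfl
        exact hb1 hw
      · refine Finset.mem_erase.2 ⟨?_, hTS hw⟩
        rintro rfl
        exact (Finset.mem_sdiff.1 (Finset.mem_coe.mp b.2)).2 hw
    have := Finset.card_le_card hsub2
    have hbS : (b : V') ∈ S := (Finset.mem_sdiff.1 (Finset.mem_coe.mp b.2)).1
    rw [Finset.card_erase_of_mem hbS] at this
    omega
  have hU2lt : U₂.card < S.card := by
    have hsub2 : U₂ ⊆ S.erase (a : V') := by
      intro w hw
      rcases Finset.mem_union.1 hw with hw | hw
      · rw [Finset.mem_sdiff] at hw
        refine Finset.mem_erase.2 ⟨?_, (Finset.mem_sdiff.1 hw.1).1⟩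
        rintro rfl
        exact hw.2 ha1
      · refine Finset.mem_erase.2 ⟨?_, hTS hw⟩
        rintro rfl
        exact (Finset.mem_sdiff.1 (Finset.mem_coe.mp a.2)).2 hw
    have := Finset.card_le_card hsub2
    have haS : (a : V') ∈ S := (Finset.mem_sdiff.1 (Finset.mem_coe.mp a.2)).1
    rw [Finset.card_erase_of_mem haS] at this
    omega
  have hUsum : U₁.card + U₂.card = S.card + T.card := by
    have hd1 : Disjoint U₁' T := by
      rw [Finset.disjoint_left]
      intro w hw hwT
      exact (Finset.mem_sdiff.1 (hU1sub hw)).2 hwT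
    have hd2 : Disjoint ((S \ T) \ U₁') T := by
      rw [Finset.disjoint_left]
      intro w hw hwT
      exact (Finset.mem_sdiff.1 (Finset.mem_sdiff.1 hw).1).2 hwT
    have hc1 : U₁.card = U₁'.card + T.card := Finset.card_union_of_disjoint hd1
    have hc2 : U₂.card = ((S \ T) \ U₁').card + T.card := Finset.card_union_of_disjoint hd2
    have hc3 : ((S \ T) \ U₁').card = (S \ T).card - U₁'.card :=
      Finset.card_sdiff_of_subset hU1sub
    have hc4 : (S \ T).card = S.card - T.card := Finset.card_sdiff_of_subset hTS
    have hc5 := Finset.card_le_card hU1sub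
    have hc6 := Finset.card_le_card hTS
    omega
  have hm1 : Dcnt B U₁ ≤ 4 * k * (U₁.card - k) := hmin U₁ hU1lt (by omega)
  have hm2 : Dcnt B U₂ ≤ 4 * k * (U₂.card - k) := hmin U₂ hU2lt (by omega)
  have key : (U₁.card - k) + (U₂.card - k) ≤ S.card - k := by omega
  have hmul : 4 * k * ((U₁.card - k) + (U₂.card - k)) ≤ 4 * k * (S.card - k) :=
    Nat.mul_le_mul_left _ key
  rw [Nat.mul_add] at hmul
  have hfin : Dcnt B S ≤ 4 * k * (S.card - k) := by
    calc Dcnt B S ≤ Dcnt B U₁ + Dcnt B U₂ := hDsplit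
      _ ≤ 4 * k * (U₁.card - k) + 4 * k * (U₂.card - k) := Nat.add_le_add hm1 hm2
      _ ≤ 4 * k * (S.card - k) := hmul
  omega

/-- the trivial single–vertex subgraph is bipartite and 0-connected -/
lemma zero_case (G : SimpleGraph V') (v : V') :
    IsBipartiteGraph (G.singletonSubgraph v).coe ∧
      IsKConnected (G.singletonSubgraph v).coe 0 := by
  refine ⟨⟨fun _ => true, ?_⟩, ?_, ?_⟩
  · rintro ⟨x, hx⟩ ⟨y, hy⟩ h
    simp only [Subgraph.coe_adj, singletonSubgraph_adj] at h
    exact absurd h (by simp [SimpleGraph.singletonSubgraph])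
  · simp [SimpleGraph.singletonSubgraph, Nat.card_coe_set_eq]
  · intro S hS
    omega

/-- an edge is bipartite and 1-connected -/
lemma one_case (G : SimpleGraph V') {x y : V'} (hadj : G.Adj x y) :
    IsBipartiteGraph (G.subgraphOfAdj hadj).coe ∧
      IsKConnected (G.subgraphOfAdj hadj).coe 1 := by
  classical
  refine ⟨⟨fun z => if z = x then true else false, ?_⟩, ?_, ?_⟩
  · rintro ⟨a, ha⟩ ⟨b, hb⟩ h
    simp only [Subgraph.coe_adj, subgraphOfAdj_adj] at h
    rw [Sym2.eq_iff] at h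
    rcases h with ⟨rfl, rfl⟩ | ⟨rfl, rfl⟩ <;> simp [hadj.ne, hadj.ne']
  · have : Nat.card ↥(G.subgraphOfAdj hadj).verts = 2 := by
      rw [Nat.card_coe_set_eq]
      simp only [subgraphOfAdj_verts]
      rw [Set.ncard_pair hadj.ne]
    omega
  · intro S hS
    have hS0 : S = ∅ := by
      have : S.ncard = 0 := by omega
      exact ((Set.ncard_eq_zero (Set.toFinite S)).1 this)
    subst hS0
    rw [Set.compl_empty]
    exact (induceUnivIso _).connected_iff.mpr
      (SimpleGraph.Subgraph.connected_iff'.mp (SimpleGraph.Subgraph.subgraphOfAdj_connected hadj))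

lemma toNat_le_of_colorable (G : SimpleGraph V') {c : ℕ} (h : G.Colorable c) :
    G.chromaticNumber.toNat ≤ c := by
  have h2 := h.chromaticNumber_le
  lift G.chromaticNumber to ℕ using (ne_top_of_le_ne_top (by simp) h2) with m hm
  rw [ENat.toNat_coe]
  exact_mod_cast h2

lemma density_zero_of_no_edge (G : SimpleGraph V') (h : ∀ x y, ¬G.Adj x y) :
    GraphDensity G = 0 := by
  have : G.edgeSet = ∅ := by
    ext e
    induction e using Sym2.ind with
    | _ x y => simp [h x y]
  rw [GraphDensity, this]
  simp

lemma colorable_one_of_no_edge (G : SimpleGraph V') (h : ∀ x y, ¬G.Adj x y) :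
    G.Colorable 1 := ⟨SimpleGraph.Coloring.mk (fun _ => 0) (fun {a b} hab => absurd hab (h a b))⟩

lemma Dcnt_univ (G : SimpleGraph V') [DecidableRel G.Adj] :
    Dcnt G Finset.univ = 2 * G.edgeFinset.card := by
  rw [Dcnt_eq_sum, ← SimpleGraph.sum_degrees_eq_twice_card_edges]
  apply Finset.sum_congr rfl
  intro v _
  rw [SimpleGraph.degree, neighborFinset_eq_filter]
  rfl

lemma ncard_edgeSet (G : SimpleGraph V') [DecidableRel G.Adj] :
    Nat.card G.edgeSet = G.edgeFinset.card := by
  rw [Nat.card_eq_fintype_card, SimpleGraph.edgeFinset, Set.toFinset_card]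

/-- the subgraph of `G` obtained from a sub-relation `B` restricted to `R` -/
def cutSub (G B : SimpleGraph V') (hBG : ∀ x y, B.Adj x y → G.Adj x y) (R : Finset V') :
    G.Subgraph where
  verts := ↑R
  Adj x y := B.Adj x y ∧ x ∈ R ∧ y ∈ R
  adj_sub := fun h => hBG _ _ h.1
  edge_vert := fun h => h.2.1
  symm := ⟨fun _ _ h => ⟨h.1.symm, h.2.2, h.2.1⟩⟩

lemma cutSub_coe (G B : SimpleGraph V') (hBG : ∀ x y, B.Adj x y → G.Adj x y) (R : Finset V') :
    (cutSub G B hBG R).coe = B.induce (↑R : Set V') := by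
  ext ⟨a, ha⟩ ⟨b, hb⟩
  simp only [Subgraph.coe_adj, comap_adj]
  show (B.Adj a b ∧ a ∈ R ∧ b ∈ R) ↔ _
  constructor
  · exact fun h => h.1
  · exact fun h => ⟨h, Finset.mem_coe.mp ha, Finset.mem_coe.mp hb⟩

end Aux

/-- Every non-null graph G contains a bipartite subgraph H with
κ(H) ≥ max{ d(G)/4, (χ(G) − 1)/8 }. -/
theorem bipartite_connected_subgraph (V : Type u) [Fintype V] [Nonempty V]
    (G : SimpleGraph V) :
    ∃ H : G.Subgraph, IsBipartiteGraph H.coe ∧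
      IsKConnected H.coe
        ⌈max (GraphDensity G / 4) (((G.chromaticNumber.toNat : ℝ) - 1) / 8)⌉₊ := by
  classical
  letI : DecidableEq V := Classical.decEq V
  letI : DecidableRel G.Adj := Classical.decRel _
  set k := ⌈max (GraphDensity G / 4) (((G.chromaticNumber.toNat : ℝ) - 1) / 8)⌉₊ with hkdef
  rcases Nat.eq_zero_or_pos k with hk0 | hkpos
  · obtain ⟨v⟩ := ‹Nonempty V›
    refine ⟨G.singletonSubgraph v, (zero_case G v).1, ?_⟩
    rw [hk0]
    exact (zero_case G v).2
  -- k ≥ 1 : G has an edge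
  have hedge : ∃ x y, G.Adj x y := by
    by_contra hno
    push_neg at hno
    have h1 : GraphDensity G = 0 := density_zero_of_no_edge G hno
    have h2 : G.chromaticNumber.toNat ≤ 1 :=
      toNat_le_of_colorable G (colorable_one_of_no_edge G hno)
    have hzero : k = 0 := by
      rw [hkdef, Nat.ceil_eq_zero]
      apply max_le
      · rw [h1]; norm_num
      · have : ((G.chromaticNumber.toNat : ℝ)) ≤ 1 := by exact_mod_cast h2
        linarith
    omega
  rcases Nat.lt_or_ge k 2 with hk1 | hk2
  · -- k = 1 : take an edge
    have hk1' : k = 1 := by omega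
    obtain ⟨x, y, hxy⟩ := hedge
    refine ⟨G.subgraphOfAdj hxy, (one_case G hxy).1, ?_⟩
    rw [hk1']
    exact (one_case G hxy).2
  -- main case : k ≥ 2
  set k' := k - 1 with hk'def
  have hk'1 : 1 ≤ k' := by omega
  have hlt : ((k' : ℕ) : ℝ) <
      max (GraphDensity G / 4) (((G.chromaticNumber.toNat : ℝ) - 1) / 8) := by
    apply Nat.lt_ceil.mp
    rw [← hkdef]
    omega
  have hnV : (0 : ℝ) < (Nat.card V : ℝ) := by
    have : 0 < Nat.card V := Nat.card_pos
    exact_mod_cast this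
  -- a nonempty W with many (ordered) edges inside
  have hW : ∃ W : Finset V, W.Nonempty ∧ 8 * k' * W.card < Dcnt G W := by
    rcases lt_max_iff.1 hlt with hd | hχ
    · -- density case
      refine ⟨Finset.univ, Finset.univ_nonempty, ?_⟩
      rw [GraphDensity, div_div] at hd
      have he : 4 * (k' : ℝ) * (Nat.card V : ℝ) < (Nat.card G.edgeSet : ℝ) := by
        rw [lt_div_iff₀ (by positivity)] at hd
        nlinarith [hd]
      have he' : 4 * k' * Nat.card V < Nat.card G.edgeSet := by exact_mod_cast he
      rw [ncard_edgeSet] at he'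
      rw [Dcnt_univ, Finset.card_univ]
      have hcV : Nat.card V = Fintype.card V := Nat.card_eq_fintype_card
      rw [hcV] at he'
      have hid : 8 * k' * Fintype.card V = 2 * (4 * k' * Fintype.card V) := by ring
      omega
    · -- chromatic case
      set c := 8 * k' + 1 with hcdef
      have hcol : ¬ G.Colorable c := by
        intro hc
        have hle := toNat_le_of_colorable G hc
        have h8 : (8 * (k' : ℝ)) < (G.chromaticNumber.toNat : ℝ) - 1 := by
          rw [lt_div_iff₀ (by norm_num)] at hχ
          linarith
        have h8' : (8 * k' + 1 : ℝ) < (G.chromaticNumber.toNat : ℝ) := by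
          push_cast at h8 ⊢
          linarith
        have : 8 * k' + 1 < G.chromaticNumber.toNat := by exact_mod_cast h8'
        omega
      have hdW : ∃ W : Finset V, W.Nonempty ∧ ∀ v ∈ W, c ≤ degIn G W v := by
        by_contra hcon
        push_neg at hcon
        exact hcol (colorable_of_degen G c (by omega) (fun W hWne => by
          obtain ⟨v, hv, hdv⟩ := hcon W hWne
          exact ⟨v, hv, hdv⟩))
      obtain ⟨W, hWne, hWdeg⟩ := hdW
      refine ⟨W, hWne, ?_⟩
      have hsum : Dcnt G W = ∑ v ∈ W, degIn G W v := Dcnt_eq_sum G W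
      have hlow : W.card * c ≤ ∑ v ∈ W, degIn G W v := by
        calc W.card * c = ∑ _v ∈ W, c := by rw [Finset.sum_const, smul_eq_mul]
          _ ≤ ∑ v ∈ W, degIn G W v := Finset.sum_le_sum hWdeg
      have hid2 : W.card * c = 8 * k' * W.card + W.card := by rw [hcdef]; ring
      have hpos : 0 < W.card := Finset.card_pos.mpr hWne
      omega
  obtain ⟨W, hWne, hWD⟩ := hW
  obtain ⟨cc, hcc⟩ := maxcut G W
  have hBD : 4 * k' * W.card < Dcnt (cutG G cc) W := by
    have hid : 8 * k' * W.card = 2 * (4 * k' * W.card) := by ring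
    omega
  have h2k : 2 * k' ≤ W.card := by
    have hle := Dcnt_le (cutG G cc) W
    rcases le_or_gt (W.card - 1) (4 * k') with h | h
    · exfalso
      have h1 : W.card * (W.card - 1) ≤ W.card * (4 * k') := Nat.mul_le_mul_left _ h
      have h2 : W.card * (4 * k') = 4 * k' * W.card := by ring
      omega
    · omega
  have hdens : 4 * k' * (W.card - k') < Dcnt (cutG G cc) W :=
    lt_of_le_of_lt (Nat.mul_le_mul_left _ (Nat.sub_le _ _)) hBD
  obtain ⟨R, hR⟩ := mader (cutG G cc) k' hk'1 W.card W rfl h2k hdens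
  have hkk : k' + 1 = k := by omega
  rw [hkk] at hR
  refine ⟨cutSub G (cutG G cc) (fun _ _ h => h.1) R, ?_, ?_⟩
  · refine ⟨fun z => cc z.1, ?_⟩
    rintro ⟨a, ha⟩ ⟨b, hb⟩ hab
    simp only [Subgraph.coe_adj] at hab
    exact hab.1.2
  · rw [cutSub_coe]
    exact hR
end
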